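/- arXiv:0711.3688 — 3 statements merged into one kernel-verified Lean document; each statement's English description precedes it below -/
import Mathlib

section
/- Let Ω ⊆ ℝ^d be open and (u_ε)_{ε∈(0,1]} a moderate family of smooth functions on Ω. Then the following are equivalent: (a) there exists a negligible family (n_ε) such that (u_ε − n_ε) satisfies the G^∞-estimates: for every compact K ⊆ Ω there is m ∈ ℕ such that for every l ∈ ℕ, p_{K,l}(u_ε − n_ε) = o(ε^{−m}) as ε → 0; (b) for every x ∈ Ω there exist a real r ≥ 0, an open neighbourhood V ⊆ Ω of x and f ∈ C^∞(V) such that ε^r u_ε|_V → f in C^∞(V) as ε → 0. -/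
open Real Topology Filter Metric

noncomputable section

/-- Euclidean `d`-space. -/
abbrev Euc (d : ℕ) : Type := EuclideanSpace ℝ (Fin d)

/-- Partial derivative in the `i`-th coordinate direction. -/
noncomputable def pderivE {d : ℕ} (i : Fin d) (f : Euc d → ℝ) : Euc d → ℝ :=
  fun x => fderiv ℝ f x (EuclideanSpace.single i (1 : ℝ))

/-- Iterated partial derivative `∂^α` along a list of coordinate directions
(a multi-index `α`, with `|α| = α.length`). -/
noncomputable def mderiv {d : ℕ} : List (Fin d) → (Euc d → ℝ) → Euc d → ℝ
  | [], f => f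
  | i :: α, f => pderivE i (mderiv α f)

lemma mderiv_zero {d : ℕ} (α : List (Fin d)) : mderiv α (fun _ => (0:ℝ)) = fun _ => 0 := by
  induction α with
  | nil => rfl
  | cons i α ih =>
    funext x
    simp [mderiv, pderivE, ih, fderiv_const]

lemma mderiv_contDiffOn {d : ℕ} {s : Set (Euc d)} (hs : IsOpen s) (α : List (Fin d))
    {f : Euc d → ℝ} (hf : ContDiffOn ℝ (⊤:ℕ∞) f s) :
    ContDiffOn ℝ (⊤:ℕ∞) (mderiv α f) s := by
  induction α with
  | nil => exact hf
  | cons i α ih =>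
    exact (ih.fderiv_of_isOpen hs (by simp)).clm_apply contDiffOn_const

lemma mderiv_differentiableAt {d : ℕ} {s : Set (Euc d)} (hs : IsOpen s) (α : List (Fin d))
    {f : Euc d → ℝ} (hf : ContDiffOn ℝ (⊤:ℕ∞) f s) {x : Euc d} (hx : x ∈ s) :
    DifferentiableAt ℝ (mderiv α f) x :=
  ((mderiv_contDiffOn hs α hf).contDiffAt (hs.mem_nhds hx)).differentiableAt (by simp)

lemma mderiv_sub {d : ℕ} {s : Set (Euc d)} (hs : IsOpen s) (α : List (Fin d))
    {f g : Euc d → ℝ} (hf : ContDiffOn ℝ (⊤:ℕ∞) f s) (hg : ContDiffOn ℝ (⊤:ℕ∞) g s) :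
    ∀ x ∈ s, mderiv α (fun y => f y - g y) x = mderiv α f x - mderiv α g x := by
  induction α with
  | nil => intro x _; rfl
  | cons i α ih =>
    intro x hx
    have hev : mderiv α (fun y => f y - g y) =ᶠ[𝓝 x] fun y => mderiv α f y - mderiv α g y :=
      eventually_of_mem (hs.mem_nhds hx) (fun y hy => ih y hy)
    show fderiv ℝ (mderiv α fun y => f y - g y) x (EuclideanSpace.single i 1) = _
    rw [hev.fderiv_eq, fderiv_fun_sub (mderiv_differentiableAt hs α hf hx)
      (mderiv_differentiableAt hs α hg hx)]
    rfl

lemma mderiv_const_mul {d : ℕ} {s : Set (Euc d)} (hs : IsOpen s) (α : List (Fin d))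
    {f : Euc d → ℝ} (hf : ContDiffOn ℝ (⊤:ℕ∞) f s) (c : ℝ) :
    ∀ x ∈ s, mderiv α (fun y => c * f y) x = c * mderiv α f x := by
  induction α with
  | nil => intro x _; rfl
  | cons i α ih =>
    intro x hx
    have hev : mderiv α (fun y => c * f y) =ᶠ[𝓝 x] fun y => c * mderiv α f y :=
      eventually_of_mem (hs.mem_nhds hx) (fun y hy => ih y hy)
    show fderiv ℝ (mderiv α fun y => c * f y) x (EuclideanSpace.single i 1) = _
    rw [hev.fderiv_eq, fderiv_const_mul (mderiv_differentiableAt hs α hf hx) c]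
    rfl

lemma ev_iff {P : ℝ → Prop} :
    (∀ᶠ ε in 𝓝[>] (0:ℝ), P ε) ↔ ∃ ε₀ > (0:ℝ), ∀ ε : ℝ, 0 < ε → ε < ε₀ → P ε := by
  constructor
  · intro h
    obtain ⟨u, hu, hsub⟩ := mem_nhdsGT_iff_exists_Ioo_subset.mp h
    exact ⟨u, hu, fun ε h1 h2 => hsub ⟨h1, h2⟩⟩
  · rintro ⟨ε₀, hε₀, h⟩
    exact eventually_of_mem (Ioo_mem_nhdsGT_of_mem ⟨le_refl 0, hε₀⟩)
      (fun ε hε => h ε hε.1 hε.2)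



/-- A moderate family `(u_ε)_{ε ∈ (0,1]}` of smooth functions on `Ω`. -/
def Moderate {d : ℕ} (Ω : Set (Euc d)) (u : ℝ → Euc d → ℝ) : Prop :=
  ∀ K ⊆ Ω, IsCompact K → ∀ l : ℕ, ∃ N : ℕ, ∃ C : ℝ, ∃ ε₀ > (0:ℝ),
    ∀ ε : ℝ, 0 < ε → ε < ε₀ → ∀ α : List (Fin d), α.length ≤ l →
      ∀ x ∈ K, |mderiv α (u ε) x| ≤ C * ε ^ (-(N : ℝ))

/-- A negligible family `(u_ε)_{ε ∈ (0,1]}` of smooth functions on `Ω`. -/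
def Negligible {d : ℕ} (Ω : Set (Euc d)) (u : ℝ → Euc d → ℝ) : Prop :=
  ∀ K ⊆ Ω, IsCompact K → ∀ l m : ℕ, ∃ C : ℝ, ∃ ε₀ > (0:ℝ),
    ∀ ε : ℝ, 0 < ε → ε < ε₀ → ∀ α : List (Fin d), α.length ≤ l →
      ∀ x ∈ K, |mderiv α (u ε) x| ≤ C * ε ^ (m : ℝ)

/-- A moderate family `(u_ε)` on `Ω` differs from a `G^∞`-family by a
negligible family iff, locally around each point of `Ω`, some `ε^r·u_ε` converges in
`C^∞` to a smooth function. -/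
theorem stmt16 {d : ℕ} (Ω : Set (Euc d)) (hΩ : IsOpen Ω)
    (u : ℝ → Euc d → ℝ)
    (husmooth : ∀ ε ∈ Set.Ioc (0:ℝ) 1, ContDiffOn ℝ (⊤ : ℕ∞) (u ε) Ω)
    (humod : Moderate Ω u) :
    (∃ nf : ℝ → Euc d → ℝ,
      (∀ ε ∈ Set.Ioc (0:ℝ) 1, ContDiffOn ℝ (⊤ : ℕ∞) (nf ε) Ω) ∧
      Negligible Ω nf ∧
      -- `(u_ε − n_ε)` satisfies the `G^∞`-estimates
      (∀ K ⊆ Ω, IsCompact K → ∃ m : ℕ, ∀ l : ℕ,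
        ∀ c > (0:ℝ), ∃ ε₀ > (0:ℝ), ∀ ε : ℝ, 0 < ε → ε < ε₀ →
          ∀ α : List (Fin d), α.length ≤ l → ∀ x ∈ K,
            |mderiv α (fun y => u ε y - nf ε y) x| ≤ c * ε ^ (-(m : ℝ)))) ↔
    (∀ x ∈ Ω, ∃ r : ℝ, 0 ≤ r ∧ ∃ V : Set (Euc d), IsOpen V ∧ x ∈ V ∧ V ⊆ Ω ∧
      ∃ f : Euc d → ℝ, ContDiffOn ℝ (⊤ : ℕ∞) f V ∧
        -- `ε^r·u_ε → f` in `C^∞(V)`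
        ∀ K ⊆ V, IsCompact K → ∀ α : List (Fin d), ∀ δ > (0:ℝ), ∃ ε₀ > (0:ℝ),
          ∀ ε : ℝ, 0 < ε → ε < ε₀ → ∀ y ∈ K,
            |mderiv α (fun z => ε ^ r * u ε z) y - mderiv α f y| ≤ δ) := by
  constructor
  · rintro ⟨nf, hnfs, hneg, hG⟩ x hxΩ
    obtain ⟨ρ', hρ', hball⟩ := Metric.isOpen_iff.mp hΩ x hxΩ
    set ρ : ℝ := ρ' / 2 with hρdef
    have hρpos : 0 < ρ := by positivity
    have hK'Ω : closedBall x ρ ⊆ Ω :=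
      (closedBall_subset_ball (by simpa [hρdef] using half_lt_self hρ')).trans hball
    obtain ⟨m, hm⟩ := hG (closedBall x ρ) hK'Ω (isCompact_closedBall x ρ)
    refine ⟨(m:ℝ), Nat.cast_nonneg m, ball x ρ, isOpen_ball, mem_ball_self hρpos,
      ball_subset_closedBall.trans hK'Ω, fun _ => 0, contDiffOn_const, ?_⟩
    intro K hKV hKc α δ hδ
    have hKK' : K ⊆ closedBall x ρ := hKV.trans ball_subset_closedBall
    have hKΩ : K ⊆ Ω := hKK'.trans hK'Ω
    rw [← ev_iff]
    have e1 := ev_iff.mpr (hm α.length (δ/2) (half_pos hδ))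
    obtain ⟨C, hC⟩ := hneg (closedBall x ρ) hK'Ω (isCompact_closedBall x ρ) α.length 1
    have e2 := ev_iff.mpr hC
    have e3 : ∀ᶠ ε in 𝓝[>] (0:ℝ), C * ε < δ/2 := by
      have ht : Tendsto (fun ε : ℝ => C * ε) (𝓝[>] 0) (𝓝 0) := by
        simpa using (tendsto_id.const_mul C).mono_left
          (nhdsWithin_le_nhds : 𝓝[>] (0:ℝ) ≤ 𝓝 0)
      exact ht.eventually_lt_const (by positivity)
    have e4 : ∀ᶠ ε in 𝓝[>] (0:ℝ), ε ∈ Set.Ioo (0:ℝ) 1 :=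
      eventually_of_mem (Ioo_mem_nhdsGT_of_mem ⟨le_refl 0, one_pos⟩) (fun _ h => h)
    filter_upwards [e1, e2, e3, e4] with ε h1 h2 h3 h4
    intro y hyK
    have hεpos : 0 < ε := h4.1
    have hε1 : ε ≤ 1 := h4.2.le
    have hyΩ : y ∈ Ω := hKΩ hyK
    have hus : ContDiffOn ℝ (⊤:ℕ∞) (u ε) Ω := husmooth ε ⟨hεpos, hε1⟩
    have hns : ContDiffOn ℝ (⊤:ℕ∞) (nf ε) Ω := hnfs ε ⟨hεpos, hε1⟩
    have hmul : mderiv α (fun z => ε ^ (m:ℝ) * u ε z) y = ε ^ (m:ℝ) * mderiv α (u ε) y :=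
      mderiv_const_mul hΩ α hus (ε ^ (m:ℝ)) y hyΩ
    have hsub : mderiv α (fun z => u ε z - nf ε z) y
        = mderiv α (u ε) y - mderiv α (nf ε) y := mderiv_sub hΩ α hus hns y hyΩ
    have hzero : mderiv α (fun _ : Euc d => (0:ℝ)) y = 0 := by rw [mderiv_zero]
    rw [hmul, hzero, sub_zero]
    have hb1 : |mderiv α (fun z => u ε z - nf ε z) y| ≤ (δ/2) * ε ^ (-(m:ℝ)) :=
      h1 α le_rfl y (hKK' hyK)
    have hb2 : |mderiv α (nf ε) y| ≤ C * ε ^ ((1:ℕ):ℝ) := h2 α le_rfl y (hKK' hyK)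
    have hb2' : |mderiv α (nf ε) y| ≤ C * ε := by
      simpa [Real.rpow_natCast] using hb2
    have hCε : 0 ≤ C * ε := le_trans (abs_nonneg _) hb2'
    have hεm_pos : (0:ℝ) < ε ^ (m:ℝ) := Real.rpow_pos_of_pos hεpos _
    have hεm_le : ε ^ (m:ℝ) ≤ 1 := Real.rpow_le_one hεpos.le hε1 (Nat.cast_nonneg m)
    have hprod : ε ^ (m:ℝ) * ε ^ (-(m:ℝ)) = 1 := by
      rw [← Real.rpow_add hεpos]; simp
    have hdecomp : mderiv α (u ε) y
        = mderiv α (fun z => u ε z - nf ε z) y + mderiv α (nf ε) y := by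
      rw [hsub]; ring
    calc |ε ^ (m:ℝ) * mderiv α (u ε) y|
        = ε ^ (m:ℝ) * |mderiv α (u ε) y| := by
          rw [abs_mul, abs_of_pos hεm_pos]
      _ ≤ ε ^ (m:ℝ) * (|mderiv α (fun z => u ε z - nf ε z) y| + |mderiv α (nf ε) y|) := by
          gcongr
          rw [hdecomp]; exact abs_add_le _ _
      _ ≤ ε ^ (m:ℝ) * ((δ/2) * ε ^ (-(m:ℝ))) + ε ^ (m:ℝ) * (C * ε) := by
          rw [mul_add]; gcongr
      _ ≤ δ/2 + C * ε := by
          have h1' : ε ^ (m:ℝ) * ((δ/2) * ε ^ (-(m:ℝ))) = δ/2 := by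
            rw [show ε ^ (m:ℝ) * ((δ/2) * ε ^ (-(m:ℝ))) = (ε ^ (m:ℝ) * ε ^ (-(m:ℝ))) * (δ/2) by ring,
              hprod, one_mul]
          have h2' : ε ^ (m:ℝ) * (C * ε) ≤ C * ε := mul_le_of_le_one_left hCε hεm_le
          linarith
      _ ≤ δ := by linarith
  · intro h
    refine ⟨fun _ _ => 0, fun ε _ => contDiffOn_const, ?_, ?_⟩
    · intro K _ _ l m
      refine ⟨0, 1, one_pos, fun ε hε _ α _ x _ => ?_⟩
      show |mderiv α (fun _ => (0:ℝ)) x| ≤ 0 * ε ^ (m:ℝ)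
      simp [mderiv_zero]
    · intro K hKΩ hKc
      have key : ∀ x ∈ K, ∃ ρ : ℝ, 0 < ρ ∧ ∃ r : ℝ, 0 ≤ r ∧ ∃ f : Euc d → ℝ,
          closedBall x ρ ⊆ Ω ∧
          (∀ α : List (Fin d), ∃ B : ℝ, 0 ≤ B ∧ ∀ y ∈ closedBall x ρ, |mderiv α f y| ≤ B) ∧
          (∀ α : List (Fin d), ∀ δ > (0:ℝ), ∀ᶠ ε in 𝓝[>] (0:ℝ),
            ∀ y ∈ closedBall x ρ, |mderiv α (fun z => ε ^ r * u ε z) y - mderiv α f y| ≤ δ) := by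
        intro x hxK
        obtain ⟨r, hr0, V, hVopen, hxV, hVΩ, f, hfs, hconv⟩ := h x (hKΩ hxK)
        obtain ⟨ρ, hρpos, hρV⟩ := (Metric.nhds_basis_closedBall.mem_iff).mp (hVopen.mem_nhds hxV)
        refine ⟨ρ, hρpos, r, hr0, f, hρV.trans hVΩ, ?_, ?_⟩
        · intro α
          obtain ⟨B, hB⟩ := (isCompact_closedBall x ρ).exists_bound_of_continuousOn
            (((mderiv_contDiffOn hVopen α hfs).continuousOn).mono hρV)
          exact ⟨B, le_trans (norm_nonneg _) (hB x (mem_closedBall_self hρpos.le)),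
            fun y hy => by simpa using hB y hy⟩
        · intro α δ hδ
          exact ev_iff.mpr (hconv (closedBall x ρ) hρV (isCompact_closedBall x ρ) α δ hδ)
      choose! ρ hρpos r hr0 f hsubΩ hB hconv using key
      obtain ⟨t, htK, hcover⟩ := hKc.elim_nhds_subcover (fun x => ball x (ρ x))
        (fun x hx => ball_mem_nhds x (hρpos x hx))
      set m : ℕ := t.sup (fun x => ⌈r x⌉₊ + 1) with hmdef
      have hm : ∀ p ∈ t, r p < (m:ℝ) := by
        intro p hp
        have h1 : (⌈r p⌉₊ + 1 : ℕ) ≤ m := Finset.le_sup (f := fun x => ⌈r x⌉₊ + 1) hp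
        have h2 : r p ≤ (⌈r p⌉₊ : ℝ) := Nat.le_ceil _
        have h3 : ((⌈r p⌉₊ + 1 : ℕ) : ℝ) ≤ (m : ℝ) := Nat.cast_le.mpr h1
        push_cast at h3
        linarith
      refine ⟨m, ?_⟩
      intro l c hc
      rw [← ev_iff]
      have hA : {α : List (Fin d) | α.length ≤ l}.Finite := List.finite_length_le _ l
      have main : ∀ α ∈ {α : List (Fin d) | α.length ≤ l}, ∀ᶠ ε in 𝓝[>] (0:ℝ),
          ∀ p ∈ t, ∀ y ∈ closedBall p (ρ p), |mderiv α (u ε) y| ≤ c * ε ^ (-(m:ℝ)) := by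
        intro α hα
        rw [Filter.eventually_all_finset]
        intro p hp
        have hpK : p ∈ K := htK p hp
        obtain ⟨B, hB0, hBb⟩ := hB p hpK α
        have hrm : r p < (m:ℝ) := hm p hp
        have econv := hconv p hpK α 1 one_pos
        have esm : ∀ᶠ ε in 𝓝[>] (0:ℝ), (B + 1) * ε ^ ((m:ℝ) - r p) < c := by
          have h0 : Tendsto (fun ε : ℝ => ε ^ ((m:ℝ) - r p)) (𝓝[>] (0:ℝ)) (𝓝 0) := by
            have hc0 : ContinuousAt (fun x : ℝ => x ^ ((m:ℝ) - r p)) 0 :=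
              continuousAt_rpow_const 0 _ (Or.inr (by linarith))
            have h5 := hc0.tendsto.mono_left (nhdsWithin_le_nhds : 𝓝[>] (0:ℝ) ≤ 𝓝 0)
            simpa [Real.zero_rpow (by linarith : (m:ℝ) - r p ≠ 0)] using h5
          have h6 : Tendsto (fun ε : ℝ => (B + 1) * ε ^ ((m:ℝ) - r p)) (𝓝[>] (0:ℝ)) (𝓝 0) := by
            simpa using h0.const_mul (B + 1)
          exact h6.eventually_lt_const hc
        have e4 : ∀ᶠ ε in 𝓝[>] (0:ℝ), ε ∈ Set.Ioo (0:ℝ) 1 :=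
          eventually_of_mem (Ioo_mem_nhdsGT_of_mem ⟨le_refl 0, one_pos⟩) (fun _ hh => hh)
        filter_upwards [econv, esm, e4] with ε h1 h2 h3
        intro y hy
        have hεpos : 0 < ε := h3.1
        have hε1 : ε ≤ 1 := h3.2.le
        have hyΩ : y ∈ Ω := hsubΩ p hpK hy
        have hus : ContDiffOn ℝ (⊤:ℕ∞) (u ε) Ω := husmooth ε ⟨hεpos, hε1⟩
        have hmul : mderiv α (fun z => ε ^ r p * u ε z) y = ε ^ r p * mderiv α (u ε) y :=
          mderiv_const_mul hΩ α hus (ε ^ r p) y hyΩ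
        have hq : (0:ℝ) < ε ^ r p := Real.rpow_pos_of_pos hεpos _
        have hqm : (0:ℝ) < ε ^ ((m:ℝ) - r p) := Real.rpow_pos_of_pos hεpos _
        have ha := h1 y hy
        rw [hmul] at ha
        have hFb := hBb y hy
        have hM : ε ^ r p * |mderiv α (u ε) y| ≤ B + 1 := by
          have habs : |ε ^ r p * mderiv α (u ε) y| ≤ B + 1 := by
            have h7 := abs_sub_abs_le_abs_sub (ε ^ r p * mderiv α (u ε) y) (mderiv α (f p) y)
            linarith
          rwa [abs_mul, abs_of_pos hq] at habs
        have hPAq : ε ^ (-(m:ℝ)) * (ε ^ ((m:ℝ) - r p) * ε ^ r p) = 1 := by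
          rw [← Real.rpow_add hεpos, ← Real.rpow_add hεpos]
          norm_num
        have s1 : ε ^ ((m:ℝ) - r p) * (ε ^ r p * |mderiv α (u ε) y|)
            ≤ ε ^ ((m:ℝ) - r p) * (B + 1) := mul_le_mul_of_nonneg_left hM hqm.le
        have s3 : ε ^ ((m:ℝ) - r p) * (ε ^ r p * |mderiv α (u ε) y|) < c := by nlinarith
        have s5 := mul_le_mul_of_nonneg_left s3.le
          (Real.rpow_pos_of_pos hεpos (-(m:ℝ))).le
        calc |mderiv α (u ε) y|
            = (ε ^ (-(m:ℝ)) * (ε ^ ((m:ℝ) - r p) * ε ^ r p)) * |mderiv α (u ε) y| := by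
              rw [hPAq, one_mul]
          _ = ε ^ (-(m:ℝ)) * (ε ^ ((m:ℝ) - r p) * (ε ^ r p * |mderiv α (u ε) y|)) := by ring
          _ ≤ ε ^ (-(m:ℝ)) * c := s5
          _ = c * ε ^ (-(m:ℝ)) := by ring
      have big := (eventually_all_finite hA).mpr main
      filter_upwards [big] with ε hbig
      intro α hαl x hxK
      have hx' := hcover hxK
      simp only [Set.mem_iUnion, exists_prop] at hx'
      obtain ⟨p, hp, hxp⟩ := hx'
      have hxcb : x ∈ closedBall p (ρ p) := ball_subset_closedBall hxp
      have hfin := hbig α hαl p hp x hxcb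
      simpa using hfin

end
end

section
/- Let x₀ ∈ ℝ and let φ be a mollifier on ℝ. (a) Suppose f : ℝ → ℝ coincides on (−∞, x₀] with a smooth function f₋ ∈ C^∞(ℝ) and on [x₀, ∞) with a smooth function f₊ ∈ C^∞(ℝ), and let w_ε = f * φ_ε (convolution). Then for every n ∈ ℕ: the strength of the singularity of f at x₀ equals −n if and only if Σ_{C^1,x₀}((w_ε)) = [0, n]. (b) For k ∈ ℕ let w_ε(x) = φ_ε^{(k)}(x − x₀) (the embedding of ∂^k δ(x − x₀), whose strength at x₀ is defined to be −k−2). Then Σ_{C^1,x₀}((w_ε)) = [0, k+2]. -/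
open Real MeasureTheory Filter Topology Set

noncomputable section

/-- `φ` is a mollifier on `ℝ`. -/
def IsMollifier (φ : ℝ → ℝ) : Prop :=
  ContDiff ℝ (⊤ : ℕ∞) φ ∧ HasCompactSupport φ ∧ (∀ x, 0 ≤ φ x) ∧ (∫ x, φ x) = 1

/-- The scaled mollifier `φ_ε(x) = ε⁻¹ φ(x/ε)`. -/
noncomputable def scaled (φ : ℝ → ℝ) (ε : ℝ) : ℝ → ℝ :=
  fun x => ε⁻¹ * φ (x / ε)

/-- `ε^r·w_ε → g` in `C^1(V)` as `ε → 0⁺`. -/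
def ConvC1 (w : ℝ → ℝ → ℝ) (r : ℝ) (V : Set ℝ) (g : ℝ → ℝ) : Prop :=
  ∀ K ⊆ V, IsCompact K → ∀ δ > (0:ℝ), ∃ ε₀ > (0:ℝ), ∀ ε : ℝ, 0 < ε → ε < ε₀ →
    ∀ x ∈ K, |ε ^ r * w ε x - g x| ≤ δ ∧ |ε ^ r * deriv (w ε) x - deriv g x| ≤ δ

/-- `N_{C^1,x₀}((w_ε))`: exponents `r ≥ 0` such that `ε^r·w_ε` converges in `C^1` to a
`C^1` function near `x₀`. -/
def NC1 (w : ℝ → ℝ → ℝ) (x₀ : ℝ) : Set ℝ :=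
  {r : ℝ | 0 ≤ r ∧ ∃ V : Set ℝ, IsOpen V ∧ x₀ ∈ V ∧
    ∃ g : ℝ → ℝ, ContDiffOn ℝ 1 g V ∧ ConvC1 w r V g}

/-- The `C^1`-singular spectrum `Σ_{C^1,x₀}((w_ε)) = [0,∞) ∖ N_{C^1,x₀}((w_ε))`. -/
def SigmaC1 (w : ℝ → ℝ → ℝ) (x₀ : ℝ) : Set ℝ :=
  {r : ℝ | 0 ≤ r} \ NC1 w x₀

/-- The strength of the singularity at `x₀` of a function that coincides with the
smooth function `fm` on `(-∞, x₀]` and with the smooth function `fp` on `[x₀, ∞)`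
equals `s`: the order of the highest derivative continuous across `x₀`, with the
convention that the strength is `-1` when `fm x₀ ≠ fp x₀`. -/
def HasStrength (fm fp : ℝ → ℝ) (x₀ : ℝ) (s : ℤ) : Prop :=
  (s = -1 ∧ fm x₀ ≠ fp x₀) ∨
  (0 ≤ s ∧ (∀ j : ℕ, (j : ℤ) ≤ s → deriv^[j] fm x₀ = deriv^[j] fp x₀) ∧
    deriv^[s.toNat + 1] fm x₀ ≠ deriv^[s.toNat + 1] fp x₀)

namespace Stmt18

lemma contDiff_one {f : ℝ → ℝ} (h : ContDiff ℝ (⊤ : ℕ∞) f) : ContDiff ℝ 1 f :=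
  h.of_le (by exact_mod_cast le_top)

lemma moll_R {φ : ℝ → ℝ} (hφ : IsMollifier φ) :
    ∃ R : ℝ, 0 < R ∧ ∀ u : ℝ, R ≤ |u| → φ u = 0 := by
  obtain ⟨-, hcs, -, -⟩ := hφ
  obtain ⟨r, hr⟩ := (Metric.isBounded_iff_subset_closedBall 0).1 hcs.isBounded
  refine ⟨max r 0 + 1, by positivity, fun u hu => ?_⟩
  apply image_eq_zero_of_notMem_tsupport
  intro hmem
  have h1 := hr hmem
  rw [Metric.mem_closedBall, Real.dist_eq, sub_zero] at h1
  have := le_max_left r 0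
  linarith

lemma conv_repr (φ f : ℝ → ℝ) {ε : ℝ} (hε : 0 < ε) (x : ℝ) :
    (∫ t, f t * scaled φ ε (x - t)) = ∫ u, f (x - ε * u) * φ u := by
  have hεne : ε ≠ 0 := ne_of_gt hε
  have h1 : (∫ t, f t * scaled φ ε (x - t)) = ∫ s, f (x - s) * scaled φ ε s := by
    rw [← integral_sub_left_eq_self (fun s => f (x - s) * scaled φ ε s) volume x]
    congr 1; ext t; simp
  have h2 := MeasureTheory.Measure.integral_comp_mul_left
    (fun s => f (x - s) * scaled φ ε s) ε
  rw [h1]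
  have h3 : (∫ s, f (x - s) * scaled φ ε s)
      = ε * ∫ u, f (x - ε * u) * scaled φ ε (ε * u) := by
    rw [h2, abs_of_pos (inv_pos.2 hε), smul_eq_mul, ← mul_assoc, mul_inv_cancel₀ hεne, one_mul]
  rw [h3]
  have h4 : ∀ u : ℝ, f (x - ε * u) * scaled φ ε (ε * u) = ε⁻¹ * (f (x - ε * u) * φ u) := by
    intro u
    unfold scaled
    rw [mul_div_cancel_left₀ u hεne]
    ring
  simp_rw [h4]
  rw [MeasureTheory.integral_const_mul, ← mul_assoc, mul_inv_cancel₀ hεne, one_mul]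


variable {x₀ : ℝ}

/-- the piecewise derivative -/
def pd (x₀ : ℝ) (fm fp : ℝ → ℝ) : ℝ → ℝ := fun x => if x < x₀ then deriv fm x else deriv fp x

lemma f_cont {f fm fp : ℝ → ℝ} (hfm : ContDiff ℝ (⊤ : ℕ∞) fm) (hfp : ContDiff ℝ (⊤ : ℕ∞) fp)
    (hfml : ∀ x ≤ x₀, f x = fm x) (hfpr : ∀ x, x₀ ≤ x → f x = fp x) : Continuous f := by
  have hval : fm x₀ = fp x₀ := by rw [← hfml x₀ le_rfl, hfpr x₀ le_rfl]
  have hfe : f = fun x => if x₀ ≤ x then fp x else fm x := by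
    funext x
    split_ifs with h
    · exact hfpr x h
    · exact hfml x (not_le.1 h).le
  rw [hfe]
  exact Continuous.if_le hfp.continuous hfm.continuous continuous_const continuous_id
    fun x hx => by rw [← hx, hval]

lemma pd_cont {fm fp : ℝ → ℝ} (hfm : ContDiff ℝ (⊤ : ℕ∞) fm) (hfp : ContDiff ℝ (⊤ : ℕ∞) fp)
    (hde : deriv fm x₀ = deriv fp x₀) : Continuous (pd x₀ fm fp) := by
  have hfe : pd x₀ fm fp = fun x => if x₀ ≤ x then deriv fp x else deriv fm x := by
    funext x
    unfold pd
    rcases lt_or_ge x x₀ with h | h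
    · rw [if_pos h, if_neg (not_le.2 h)]
    · rw [if_neg (not_lt.2 h), if_pos h]
  rw [hfe]
  exact Continuous.if_le ((contDiff_one hfp).continuous_deriv le_rfl)
    ((contDiff_one hfm).continuous_deriv le_rfl) continuous_const continuous_id
    fun x hx => by rw [← hx, hde]

lemma pd_meas {fm fp : ℝ → ℝ} (hfm : ContDiff ℝ (⊤ : ℕ∞) fm) (hfp : ContDiff ℝ (⊤ : ℕ∞) fp) :
    Measurable (pd x₀ fm fp) := by
  unfold pd
  exact Measurable.ite measurableSet_Iio
    ((contDiff_one hfm).continuous_deriv le_rfl).measurable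
    ((contDiff_one hfp).continuous_deriv le_rfl).measurable

lemma piecewise_lip {f fm fp : ℝ → ℝ} (hfm : ContDiff ℝ (⊤ : ℕ∞) fm)
    (hfp : ContDiff ℝ (⊤ : ℕ∞) fp)
    (hfml : ∀ x ≤ x₀, f x = fm x) (hfpr : ∀ x, x₀ ≤ x → f x = fp x)
    {a b L : ℝ} (hLm : ∀ y ∈ Icc a b, |deriv fm y| ≤ L) (hLp : ∀ y ∈ Icc a b, |deriv fp y| ≤ L) :
    ∀ p ∈ Icc a b, ∀ q ∈ Icc a b, |f p - f q| ≤ L * |p - q| := by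
  have hval : fm x₀ = fp x₀ := by rw [← hfml x₀ le_rfl, hfpr x₀ le_rfl]
  have hm : ∀ p ∈ Icc a b, ∀ q ∈ Icc a b, |fm p - fm q| ≤ L * |p - q| := by
    intro p hp q hq
    simpa [Real.norm_eq_abs] using Convex.norm_image_sub_le_of_norm_deriv_le
      (fun y _ => ((contDiff_one hfm).differentiable one_ne_zero).differentiableAt)
      (fun y hy => by simpa [Real.norm_eq_abs] using hLm y hy) (convex_Icc a b) hq hp
  have hp' : ∀ p ∈ Icc a b, ∀ q ∈ Icc a b, |fp p - fp q| ≤ L * |p - q| := by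
    intro p hp q hq
    simpa [Real.norm_eq_abs] using Convex.norm_image_sub_le_of_norm_deriv_le
      (fun y _ => ((contDiff_one hfp).differentiable one_ne_zero).differentiableAt)
      (fun y hy => by simpa [Real.norm_eq_abs] using hLp y hy) (convex_Icc a b) hq hp
  have key : ∀ p ∈ Icc a b, ∀ q ∈ Icc a b, p ≤ q → |f q - f p| ≤ L * |q - p| := by
    intro p hp q hq hpq
    rcases le_or_gt q x₀ with h1 | h1
    · rw [hfml p (hpq.trans h1), hfml q h1]
      exact hm q hq p hp
    rcases le_or_gt x₀ p with h2 | h2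
    · rw [hfpr p h2, hfpr q (h2.trans hpq)]
      exact hp' q hq p hp
    · have hx₀ : x₀ ∈ Icc a b := ⟨hp.1.trans h2.le, h1.le.trans hq.2⟩
      have e1 : f q - f p = (fp q - fp x₀) + (fm x₀ - fm p) := by
        rw [hfpr q h1.le, hfml p h2.le, hval]; ring
      have c1 := hp' q hq x₀ hx₀
      have c2 := hm x₀ hx₀ p hp
      rw [abs_of_nonneg (by linarith : (0:ℝ) ≤ q - x₀)] at c1
      rw [abs_of_nonneg (by linarith : (0:ℝ) ≤ x₀ - p)] at c2
      calc |f q - f p| ≤ |fp q - fp x₀| + |fm x₀ - fm p| := by rw [e1]; exact abs_add_le _ _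
        _ ≤ L * (q - x₀) + L * (x₀ - p) := add_le_add c1 c2
        _ = L * |q - p| := by rw [abs_of_nonneg (by linarith : (0:ℝ) ≤ q - p)]; ring
  intro p hp q hq
  rcases le_total p q with h | h
  · rw [abs_sub_comm (f p), abs_sub_comm p]
    exact key p hp q hq h
  · exact key q hq p hp h


lemma moll_integrable {φ : ℝ → ℝ} (hφ : IsMollifier φ) : Integrable φ :=
  hφ.1.continuous.integrable_of_hasCompactSupport hφ.2.1

lemma cont_mul_moll_integrable {φ : ℝ → ℝ} (hφ : IsMollifier φ) {h : ℝ → ℝ}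
    (hh : Continuous h) : Integrable (fun u => h u * φ u) :=
  (hh.mul hφ.1.continuous).integrable_of_hasCompactSupport
    (show HasCompactSupport (h * φ) from hφ.2.1.mul_left)

lemma moll_bound {φ : ℝ → ℝ} (hφ : IsMollifier φ) {R : ℝ}
    (hR : ∀ u : ℝ, R ≤ |u| → φ u = 0)
    {h : ℝ → ℝ} {x ε C : ℝ} (hε : 0 < ε)
    (hC : ∀ y : ℝ, |x - y| ≤ ε * R → |h y| ≤ C) :
    |∫ u, h (x - ε * u) * φ u| ≤ C := by
  obtain ⟨hsm, hcs, hpos, hint⟩ := hφ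
  have hφint : Integrable φ := hsm.continuous.integrable_of_hasCompactSupport hcs
  have hb : ∀ u : ℝ, ‖h (x - ε * u) * φ u‖ ≤ C * φ u := by
    intro u
    rcases le_or_gt R |u| with hu | hu
    · simp [hR u hu]
    · rw [Real.norm_eq_abs, abs_mul, abs_of_nonneg (hpos u)]
      refine mul_le_mul_of_nonneg_right (hC _ ?_) (hpos u)
      have he : x - (x - ε * u) = ε * u := by ring
      rw [he, abs_mul, abs_of_pos hε]
      exact mul_le_mul_of_nonneg_left hu.le hε.le
  calc |∫ u, h (x - ε * u) * φ u| ≤ ∫ u, C * φ u := by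
        simpa [Real.norm_eq_abs] using
          norm_integral_le_of_norm_le (hφint.const_mul C) (Eventually.of_forall hb)
    _ = C := by rw [MeasureTheory.integral_const_mul, hint, mul_one]

lemma moll_uniform {φ : ℝ → ℝ} (hφ : IsMollifier φ) {R : ℝ} (hR0 : 0 < R)
    (hR : ∀ u : ℝ, R ≤ |u| → φ u = 0)
    {h : ℝ → ℝ} (hh : Continuous h) {A δ : ℝ} (hA : 0 ≤ A) (hδ : 0 < δ) (x₀ : ℝ) :
    ∃ ε₁ > 0, ∀ ε : ℝ, 0 < ε → ε < ε₁ → ∀ x : ℝ, |x - x₀| ≤ A →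
      |(∫ u, h (x - ε * u) * φ u) - h x| ≤ δ := by
  have hpos := hφ.2.2.1
  have hint := hφ.2.2.2
  have hφint : Integrable φ := moll_integrable hφ
  have hUC := (isCompact_Icc (a := x₀ - (A + R)) (b := x₀ + (A + R))).uniformContinuousOn_of_continuous
    hh.continuousOn
  rw [Metric.uniformContinuousOn_iff] at hUC
  obtain ⟨η, hη, hkey⟩ := hUC δ hδ
  refine ⟨min 1 (η / (R + 1)), by positivity, fun ε hε hεlt x hx => ?_⟩
  have hε1 : ε ≤ 1 := le_of_lt (lt_of_lt_of_le hεlt (min_le_left _ _))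
  have hεη : ε < η / (R + 1) := lt_of_lt_of_le hεlt (min_le_right _ _)
  have hxS : x ∈ Icc (x₀ - (A + R)) (x₀ + (A + R)) := by
    have := abs_le.1 hx
    constructor <;> [linarith; linarith]
  have hint1 : Integrable (fun u => h (x - ε * u) * φ u) := by
    refine Continuous.integrable_of_hasCompactSupport
      ((hh.comp (continuous_const.sub (continuous_const.mul continuous_id))).mul hφ.1.continuous) ?_
    exact (show HasCompactSupport ((fun u => h (x - ε * u)) * φ) from hφ.2.1.mul_left)
  have hint2 : Integrable (fun u => h x * φ u) := hφint.const_mul _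
  have heq : (∫ u, h (x - ε * u) * φ u) - h x = ∫ u, (h (x - ε * u) - h x) * φ u := by
    have : (∫ u, (h (x - ε * u) - h x) * φ u)
        = (∫ u, h (x - ε * u) * φ u) - ∫ u, h x * φ u := by
      simp_rw [sub_mul]
      exact MeasureTheory.integral_sub hint1 hint2
    rw [this, MeasureTheory.integral_const_mul, hint, mul_one]
  rw [heq]
  have hb : ∀ u : ℝ, ‖(h (x - ε * u) - h x) * φ u‖ ≤ δ * φ u := by
    intro u
    rcases le_or_gt R |u| with hu | hu
    · simp [hR u hu]
    · rw [Real.norm_eq_abs, abs_mul, abs_of_nonneg (hpos u)]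
      refine mul_le_mul_of_nonneg_right ?_ (hpos u)
      have habs := abs_le.1 hx
      have huabs := abs_le.1 (le_of_lt hu)
      have hmem : x - ε * u ∈ Icc (x₀ - (A + R)) (x₀ + (A + R)) := by
        have h1 : |ε * u| ≤ R := by
          rw [abs_mul, abs_of_pos hε]
          calc ε * |u| ≤ 1 * R := by
                apply mul_le_mul hε1 hu.le (abs_nonneg u) zero_le_one
            _ = R := one_mul R
        have := abs_le.1 h1
        constructor <;> linarith
      have hd : dist (x - ε * u) x < η := by
        rw [Real.dist_eq]
        have h2 : |x - ε * u - x| = ε * |u| := by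
          rw [show x - ε * u - x = -(ε * u) by ring, abs_neg, abs_mul, abs_of_pos hε]
        rw [h2]
        calc ε * |u| < (η / (R + 1)) * (R + 1) := by
              apply mul_lt_mul' hεη.le (by linarith) (abs_nonneg u)
              positivity
          _ = η := div_mul_cancel₀ η (by positivity)
        
      have := hkey _ hmem _ hxS hd
      rw [Real.dist_eq] at this
      exact this.le
  calc |∫ u, (h (x - ε * u) - h x) * φ u| ≤ ∫ u, δ * φ u := by
        simpa [Real.norm_eq_abs] using
          norm_integral_le_of_norm_le (hφint.const_mul δ) (Eventually.of_forall hb)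
    _ = δ := by rw [MeasureTheory.integral_const_mul, hint, mul_one]


lemma conv_hasDerivAt {φ : ℝ → ℝ} (hφ : IsMollifier φ)
    {f fm fp : ℝ → ℝ} (hfm : ContDiff ℝ (⊤ : ℕ∞) fm) (hfp : ContDiff ℝ (⊤ : ℕ∞) fp)
    (hfml : ∀ x ≤ x₀, f x = fm x) (hfpr : ∀ x, x₀ ≤ x → f x = fp x)
    {ε : ℝ} (hε : 0 < ε) (x : ℝ) :
    HasDerivAt (fun y => ∫ u, f (y - ε * u) * φ u)
      (∫ u, pd x₀ fm fp (x - ε * u) * φ u) x := by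
  obtain ⟨R, hR0, hR⟩ := moll_R hφ
  obtain ⟨hsm, hcs, hpos, hint⟩ := hφ
  have hf_cont : Continuous f := f_cont hfm hfp hfml hfpr
  set a := x - (1 + ε * R) with ha
  set b := x + (1 + ε * R) with hb
  obtain ⟨Lm, hLm⟩ := (isCompact_Icc (a := a) (b := b)).exists_bound_of_continuousOn
    ((contDiff_one hfm).continuous_deriv le_rfl).continuousOn
  obtain ⟨Lp, hLp⟩ := (isCompact_Icc (a := a) (b := b)).exists_bound_of_continuousOn
    ((contDiff_one hfp).continuous_deriv le_rfl).continuousOn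
  set L := max Lm Lp with hL
  have hLm' : ∀ y ∈ Icc a b, |deriv fm y| ≤ L := fun y hy => by
    have := hLm y hy; rw [Real.norm_eq_abs] at this; exact this.trans (le_max_left _ _)
  have hLp' : ∀ y ∈ Icc a b, |deriv fp y| ≤ L := fun y hy => by
    have := hLp y hy; rw [Real.norm_eq_abs] at this; exact this.trans (le_max_right _ _)
  have hLip := piecewise_lip hfm hfp hfml hfpr hLm' hLp'
  have hmem : ∀ {y u : ℝ}, y ∈ Metric.ball x 1 → |u| < R → y - ε * u ∈ Icc a b := by
    intro y u hy hu
    rw [Metric.mem_ball, Real.dist_eq] at hy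
    have h1 := abs_le.1 hy.le
    have h2 : |ε * u| ≤ ε * R := by
      rw [abs_mul, abs_of_pos hε]
      exact mul_le_mul_of_nonneg_left hu.le hε.le
    have h3 := abs_le.1 h2
    constructor <;> [simp only [ha]; simp only [hb]] <;> linarith
  refine (hasDerivAt_integral_of_dominated_loc_of_lip (s := Metric.ball x 1)
    (bound := fun u => L * φ u) (Metric.ball_mem_nhds x zero_lt_one) ?_ ?_ ?_ ?_ ?_ ?_).2
  · exact Eventually.of_forall fun y =>
      ((hf_cont.comp (continuous_const.sub (continuous_const.mul continuous_id))).mul hsm.continuous).aestronglyMeasurable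
  · refine Continuous.integrable_of_hasCompactSupport
      ((hf_cont.comp (continuous_const.sub (continuous_const.mul continuous_id))).mul hsm.continuous) ?_
    exact (show HasCompactSupport ((fun u => f (x - ε * u)) * φ) from hcs.mul_left)
  · exact (((pd_meas hfm hfp).comp ((measurable_id.const_mul ε).const_sub x)).mul
      hsm.continuous.measurable).aestronglyMeasurable
  · refine Eventually.of_forall fun u => ?_
    rcases le_or_gt R |u| with hu | hu
    · apply LipschitzOnWith.of_dist_le_mul
      intro y₁ _ y₂ _
      simp [hR u hu, dist_nonneg]
    · apply LipschitzOnWith.of_dist_le_mul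
      intro y₁ h₁ y₂ h₂
      rw [Real.dist_eq, Real.dist_eq]
      have he : f (y₁ - ε * u) * φ u - f (y₂ - ε * u) * φ u
          = (f (y₁ - ε * u) - f (y₂ - ε * u)) * φ u := by ring
      rw [he, abs_mul, abs_of_nonneg (hpos u)]
      have hl := hLip _ (hmem h₁ hu) _ (hmem h₂ hu)
      have he2 : y₁ - ε * u - (y₂ - ε * u) = y₁ - y₂ := by ring
      rw [he2] at hl
      calc |f (y₁ - ε * u) - f (y₂ - ε * u)| * φ u ≤ L * |y₁ - y₂| * φ u :=
            mul_le_mul_of_nonneg_right hl (hpos u)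
        _ = (L * φ u) * |y₁ - y₂| := by ring
        _ ≤ |L * φ u| * |y₁ - y₂| :=
            mul_le_mul_of_nonneg_right (le_abs_self _) (abs_nonneg _)
        _ = (Real.nnabs (L * φ u) : ℝ) * |y₁ - y₂| := by rw [Real.coe_nnabs]
  · exact (hsm.continuous.integrable_of_hasCompactSupport hcs).const_mul L
  · have hae : ∀ᵐ (u : ℝ), u ≠ (x - x₀) / ε := by
      rw [ae_iff]
      have : {u : ℝ | ¬u ≠ (x - x₀) / ε} = {(x - x₀) / ε} := by
        ext u; simp [Set.mem_singleton_iff]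
      rw [this]
      exact measure_singleton _
    filter_upwards [hae] with u hu
    have hz : x - ε * u ≠ x₀ := by
      intro h
      apply hu
      field_simp
      linarith
    rcases lt_or_gt_of_ne hz with hlt | hgt
    · have hop : IsOpen {y : ℝ | y - ε * u < x₀} :=
        isOpen_lt (continuous_id.sub continuous_const) continuous_const
      have hev : (fun y => f (y - ε * u) * φ u) =ᶠ[𝓝 x] fun y => fm (y - ε * u) * φ u := by
        filter_upwards [hop.mem_nhds hlt] with y hy
        rw [hfml _ (le_of_lt hy)]
      have h1 : HasDerivAt (fun y : ℝ => y - ε * u) 1 x := (hasDerivAt_id x).sub_const _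
      have h2 : HasDerivAt fm (deriv fm (x - ε * u)) (x - ε * u) :=
        (((contDiff_one hfm).differentiable one_ne_zero) _).hasDerivAt
      have hd : HasDerivAt (fun y => fm (y - ε * u) * φ u) (deriv fm (x - ε * u) * φ u) x := by
        simpa using (h2.comp x h1).mul_const (φ u)
      have := hd.congr_of_eventuallyEq hev
      simpa [pd, if_pos hlt] using this
    · have hop : IsOpen {y : ℝ | x₀ < y - ε * u} :=
        isOpen_lt continuous_const (continuous_id.sub continuous_const)
      have hev : (fun y => f (y - ε * u) * φ u) =ᶠ[𝓝 x] fun y => fp (y - ε * u) * φ u := by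
        filter_upwards [hop.mem_nhds hgt] with y hy
        rw [hfpr _ (le_of_lt hy)]
      have h1 : HasDerivAt (fun y : ℝ => y - ε * u) 1 x := (hasDerivAt_id x).sub_const _
      have h2 : HasDerivAt fp (deriv fp (x - ε * u)) (x - ε * u) :=
        (((contDiff_one hfp).differentiable one_ne_zero) _).hasDerivAt
      have hd : HasDerivAt (fun y => fp (y - ε * u) * φ u) (deriv fp (x - ε * u) * φ u) x := by
        simpa using (h2.comp x h1).mul_const (φ u)
      have := hd.congr_of_eventuallyEq hev
      simpa [pd, if_neg (not_lt.2 hgt.le)] using this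


lemma conv_deriv_eq {φ : ℝ → ℝ} (hφ : IsMollifier φ)
    {f fm fp : ℝ → ℝ} (hfm : ContDiff ℝ (⊤ : ℕ∞) fm) (hfp : ContDiff ℝ (⊤ : ℕ∞) fp)
    (hfml : ∀ x ≤ x₀, f x = fm x) (hfpr : ∀ x, x₀ ≤ x → f x = fp x)
    {ε : ℝ} (hε : 0 < ε) (x : ℝ) :
    deriv (fun y => ∫ t, f t * scaled φ ε (y - t)) x = ∫ u, pd x₀ fm fp (x - ε * u) * φ u := by
  have hfe : (fun y => ∫ t, f t * scaled φ ε (y - t)) = fun y => ∫ u, f (y - ε * u) * φ u :=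
    funext fun y => conv_repr φ f hε y
  rw [hfe]
  exact (conv_hasDerivAt hφ hfm hfp hfml hfpr hε x).deriv

lemma rpow_small {q δ C : ℝ} (hq : 0 < q) (hδ : 0 < δ) (hC : 0 < C) {ε : ℝ} (hε : 0 < ε)
    (hlt : ε < (δ / C) ^ q⁻¹) : ε ^ q * C ≤ δ := by
  have h1 : ε ^ q < ((δ / C) ^ q⁻¹) ^ q := Real.rpow_lt_rpow hε.le hlt hq
  rw [← Real.rpow_mul (by positivity), inv_mul_cancel₀ hq.ne', Real.rpow_one] at h1
  calc ε ^ q * C ≤ (δ / C) * C := mul_le_mul_of_nonneg_right h1.le hC.le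
    _ = δ := div_mul_cancel₀ _ hC.ne'

lemma pd_bound {fm fp : ℝ → ℝ} (hfm : ContDiff ℝ (⊤ : ℕ∞) fm) (hfp : ContDiff ℝ (⊤ : ℕ∞) fp)
    (a b : ℝ) : ∃ L : ℝ, 0 ≤ L ∧ ∀ y ∈ Icc a b, |pd x₀ fm fp y| ≤ L := by
  obtain ⟨Lm, hLm⟩ := (isCompact_Icc (a := a) (b := b)).exists_bound_of_continuousOn
    ((contDiff_one hfm).continuous_deriv le_rfl).continuousOn
  obtain ⟨Lp, hLp⟩ := (isCompact_Icc (a := a) (b := b)).exists_bound_of_continuousOn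
    ((contDiff_one hfp).continuous_deriv le_rfl).continuousOn
  refine ⟨max (max Lm Lp) 0, le_max_right _ _, fun y hy => ?_⟩
  unfold pd
  split_ifs
  · exact le_trans (by simpa [Real.norm_eq_abs] using hLm y hy)
      (le_trans (le_max_left _ _) (le_max_left _ _))
  · exact le_trans (by simpa [Real.norm_eq_abs] using hLp y hy)
      (le_trans (le_max_right _ _) (le_max_left _ _))

lemma pd_aesm {φ : ℝ → ℝ} (hφ : IsMollifier φ)
    {fm fp : ℝ → ℝ} (hfm : ContDiff ℝ (⊤ : ℕ∞) fm) (hfp : ContDiff ℝ (⊤ : ℕ∞) fp)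
    (x ε : ℝ) :
    AEStronglyMeasurable (fun u => pd x₀ fm fp (x - ε * u) * φ u) volume :=
  (((pd_meas hfm hfp).comp ((measurable_id.const_mul ε).const_sub x)).mul
    hφ.1.continuous.measurable).aestronglyMeasurable

/-- Any positive exponent is in `N_{C¹}` for the convolution family. -/
lemma conv_pos_mem {φ : ℝ → ℝ} (hφ : IsMollifier φ)
    {f fm fp : ℝ → ℝ} (hfm : ContDiff ℝ (⊤ : ℕ∞) fm) (hfp : ContDiff ℝ (⊤ : ℕ∞) fp)
    (hfml : ∀ x ≤ x₀, f x = fm x) (hfpr : ∀ x, x₀ ≤ x → f x = fp x)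
    {r : ℝ} (hr : 0 < r) :
    r ∈ NC1 (fun ε x => ∫ t : ℝ, f t * scaled φ ε (x - t)) x₀ := by
  obtain ⟨R, hR0, hR⟩ := moll_R hφ
  have hf_cont : Continuous f := f_cont hfm hfp hfml hfpr
  refine ⟨hr.le, Ioo (x₀ - 1) (x₀ + 1), isOpen_Ioo,
    ⟨by linarith, by linarith⟩, fun _ => 0, contDiffOn_const, ?_⟩
  intro K hKV hK δ hδ
  set B := 1 + R with hB
  obtain ⟨Mf, hMf⟩ := (isCompact_Icc (a := x₀ - B) (b := x₀ + B)).exists_bound_of_continuousOn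
    hf_cont.continuousOn
  obtain ⟨L, hL0, hLpd⟩ := pd_bound (x₀ := x₀) hfm hfp (x₀ - B) (x₀ + B)
  set C := max Mf L + 1 with hC
  have hMf0 : 0 ≤ Mf := le_trans (norm_nonneg _) (hMf x₀ ⟨by linarith, by linarith⟩)
  have hC0 : 0 < C := by
    have := le_max_left Mf L; have := le_max_right Mf L; positivity
  refine ⟨min 1 ((δ / C) ^ r⁻¹), lt_min one_pos (Real.rpow_pos_of_pos (by positivity) _),
    fun ε hε hεlt x hx => ?_⟩
  have hε1 : ε ≤ 1 := le_of_lt (lt_of_lt_of_le hεlt (min_le_left _ _))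
  have hεr : ε < (δ / C) ^ r⁻¹ := lt_of_lt_of_le hεlt (min_le_right _ _)
  have hsmall : ε ^ r * C ≤ δ := rpow_small hr hδ hC0 hε hεr
  have hrpow0 : 0 ≤ ε ^ r := Real.rpow_nonneg hε.le r
  have hx1 : |x - x₀| ≤ 1 := by
    have := hKV hx
    rw [mem_Ioo] at this
    rw [abs_le]; constructor <;> linarith [this.1, this.2]
  have hrange : ∀ y : ℝ, |x - y| ≤ ε * R → y ∈ Icc (x₀ - B) (x₀ + B) := by
    intro y hy
    have h1 := abs_le.1 hy
    have h2 := abs_le.1 hx1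
    have h3 : ε * R ≤ R := by nlinarith
    rw [mem_Icc]
    constructor <;> simp only [hB] <;> linarith
  constructor
  · simp only [conv_repr φ f hε x, sub_zero]
    rw [abs_mul, abs_of_nonneg hrpow0]
    have hwb : |∫ u, f (x - ε * u) * φ u| ≤ Mf :=
      moll_bound hφ hR hε fun y hy => by
        simpa [Real.norm_eq_abs] using hMf y (hrange y hy)
    calc ε ^ r * |∫ u, f (x - ε * u) * φ u| ≤ ε ^ r * C := by
          apply mul_le_mul_of_nonneg_left _ hrpow0
          calc |∫ u, f (x - ε * u) * φ u| ≤ Mf := hwb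
            _ ≤ C := by simp only [hC]; have := le_max_left Mf L; linarith
      _ ≤ δ := hsmall
  · rw [conv_deriv_eq hφ hfm hfp hfml hfpr hε x, deriv_const, sub_zero, abs_mul,
      abs_of_nonneg hrpow0]
    have hdb : |∫ u, pd x₀ fm fp (x - ε * u) * φ u| ≤ L :=
      moll_bound hφ hR hε fun y hy => hLpd y (hrange y hy)
    calc ε ^ r * |∫ u, pd x₀ fm fp (x - ε * u) * φ u| ≤ ε ^ r * C := by
          apply mul_le_mul_of_nonneg_left _ hrpow0
          calc |∫ u, pd x₀ fm fp (x - ε * u) * φ u| ≤ L := hdb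
            _ ≤ C := by simp only [hC]; have := le_max_right Mf L; linarith
      _ ≤ δ := hsmall


lemma pd_lim {φ : ℝ → ℝ} (hφ : IsMollifier φ) {R : ℝ} (hR0 : 0 < R)
    (hR : ∀ u : ℝ, R ≤ |u| → φ u = 0)
    {fm fp : ℝ → ℝ} (hfm : ContDiff ℝ (⊤ : ℕ∞) fm) (hfp : ContDiff ℝ (⊤ : ℕ∞) fp)
    {x : ℝ} (hx : x ≠ x₀) {δ : ℝ} (hδ : 0 < δ) :
    ∃ ε₁ > 0, ∀ ε : ℝ, 0 < ε → ε < ε₁ →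
      |(∫ u, pd x₀ fm fp (x - ε * u) * φ u) - pd x₀ fm fp x| ≤ δ := by
  rcases lt_or_gt_of_ne hx with hlt | hgt
  · obtain ⟨ε₁, hε₁, hu⟩ := moll_uniform hφ hR0 hR
      ((contDiff_one hfm).continuous_deriv le_rfl) (A := |x - x₀|) (abs_nonneg _) hδ x₀
    refine ⟨min ε₁ ((x₀ - x) / (R + 1)), lt_min hε₁ (div_pos (by linarith) (by linarith)), fun ε hε hεlt => ?_⟩
    have hεa : ε < ε₁ := lt_of_lt_of_le hεlt (min_le_left _ _)
    have hεb : ε < (x₀ - x) / (R + 1) := lt_of_lt_of_le hεlt (min_le_right _ _)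
    have hcong : (fun u => pd x₀ fm fp (x - ε * u) * φ u)
        = fun u => deriv fm (x - ε * u) * φ u := by
      funext u
      rcases le_or_gt R |u| with h | h
      · simp [hR u h]
      · have h1 : ε * |u| < x₀ - x := by
          calc ε * |u| < ((x₀ - x) / (R + 1)) * (R + 1) :=
                mul_lt_mul'' hεb (by linarith) hε.le (abs_nonneg u)
            _ = x₀ - x := div_mul_cancel₀ _ (by positivity)
        have h2 : x - ε * u < x₀ := by
          have h3 : |ε * u| = ε * |u| := by rw [abs_mul, abs_of_pos hε]
          have h4 := neg_abs_le (ε * u)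
          rw [h3] at h4
          linarith
        rw [pd]
        simp only [if_pos h2]
    rw [hcong, show pd x₀ fm fp x = deriv fm x by rw [pd]; simp [if_pos hlt]]
    exact hu ε hε hεa x le_rfl
  · obtain ⟨ε₁, hε₁, hu⟩ := moll_uniform hφ hR0 hR
      ((contDiff_one hfp).continuous_deriv le_rfl) (A := |x - x₀|) (abs_nonneg _) hδ x₀
    refine ⟨min ε₁ ((x - x₀) / (R + 1)), lt_min hε₁ (div_pos (by linarith) (by linarith)), fun ε hε hεlt => ?_⟩
    have hεa : ε < ε₁ := lt_of_lt_of_le hεlt (min_le_left _ _)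
    have hεb : ε < (x - x₀) / (R + 1) := lt_of_lt_of_le hεlt (min_le_right _ _)
    have hcong : (fun u => pd x₀ fm fp (x - ε * u) * φ u)
        = fun u => deriv fp (x - ε * u) * φ u := by
      funext u
      rcases le_or_gt R |u| with h | h
      · simp [hR u h]
      · have h1 : ε * |u| < x - x₀ := by
          calc ε * |u| < ((x - x₀) / (R + 1)) * (R + 1) :=
                mul_lt_mul'' hεb (by linarith) hε.le (abs_nonneg u)
            _ = x - x₀ := div_mul_cancel₀ _ (by positivity)
        have h2 : x₀ < x - ε * u := by
          have h3 : ε * u ≤ ε * |u| := by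
            have := le_abs_self (ε * u)
            rw [abs_mul, abs_of_pos hε] at this
            exact this
          linarith
        rw [pd]
        simp only [if_neg (not_lt.2 h2.le)]
    rw [hcong, show pd x₀ fm fp x = deriv fp x by rw [pd]; simp [if_neg (not_lt.2 hgt.le)]]
    exact hu ε hε hεa x le_rfl


/-- If the one-sided first derivatives disagree, `r = 0` is not in `N_{C¹}`. -/
lemma conv_zero_not_mem {φ : ℝ → ℝ} (hφ : IsMollifier φ)
    {f fm fp : ℝ → ℝ} (hfm : ContDiff ℝ (⊤ : ℕ∞) fm) (hfp : ContDiff ℝ (⊤ : ℕ∞) fp)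
    (hfml : ∀ x ≤ x₀, f x = fm x) (hfpr : ∀ x, x₀ ≤ x → f x = fp x)
    (hne : deriv fm x₀ ≠ deriv fp x₀) :
    (0:ℝ) ∉ NC1 (fun ε x => ∫ t : ℝ, f t * scaled φ ε (x - t)) x₀ := by
  obtain ⟨R, hR0, hR⟩ := moll_R hφ
  rintro ⟨-, V, hV, hx₀V, g, hg, hconv⟩
  have key : ∀ x ∈ V, x ≠ x₀ → deriv g x = pd x₀ fm fp x := by
    intro x hxV hxne
    apply eq_of_forall_dist_le
    intro δ hδ
    obtain ⟨ε₀, hε₀p, hc⟩ := hconv {x} (singleton_subset_iff.2 hxV) isCompact_singleton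
      (δ / 2) (by positivity)
    obtain ⟨ε₁, hε₁p, hlim⟩ := pd_lim hφ hR0 hR hfm hfp hxne (half_pos hδ)
    have hminp : 0 < min ε₀ ε₁ := lt_min hε₀p hε₁p
    set ε := min ε₀ ε₁ / 2 with hεdef
    have hεpos : 0 < ε := half_pos hminp
    have hεhalf : ε < min ε₀ ε₁ := half_lt_self hminp
    have h1 := (hc ε hεpos (hεhalf.trans_le (min_le_left _ _)) x rfl).2
    rw [Real.rpow_zero, one_mul, conv_deriv_eq hφ hfm hfp hfml hfpr hεpos x] at h1
    have h2 := hlim ε hεpos (hεhalf.trans_le (min_le_right _ _))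
    rw [Real.dist_eq]
    calc |deriv g x - pd x₀ fm fp x|
        ≤ |(∫ u, pd x₀ fm fp (x - ε * u) * φ u) - deriv g x|
          + |(∫ u, pd x₀ fm fp (x - ε * u) * φ u) - pd x₀ fm fp x| := by
          rw [abs_sub_comm _ (deriv g x)]
          exact abs_sub_le _ _ _ |>.trans_eq (by rw [abs_sub_comm]) |>.trans le_rfl
      _ ≤ δ / 2 + δ / 2 := add_le_add h1 h2
      _ = δ := by ring
  have hgc : ContinuousAt (deriv g) x₀ :=
    (hg.continuousOn_deriv_of_isOpen hV le_rfl).continuousAt (hV.mem_nhds hx₀V)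
  have hVmem : V ∈ 𝓝 x₀ := hV.mem_nhds hx₀V
  have hLeft : deriv g x₀ = deriv fm x₀ := by
    have hL : Tendsto (deriv g) (𝓝[<] x₀) (𝓝 (deriv g x₀)) :=
      hgc.tendsto.mono_left nhdsWithin_le_nhds
    have hEq : deriv g =ᶠ[𝓝[<] x₀] deriv fm := by
      filter_upwards [mem_nhdsWithin_of_mem_nhds hVmem, self_mem_nhdsWithin] with y hyV hylt
      rw [key y hyV (ne_of_lt hylt), pd]
      simp [if_pos (show y < x₀ from hylt)]
    have h3 : Tendsto (deriv fm) (𝓝[<] x₀) (𝓝 (deriv g x₀)) := hL.congr' hEq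
    have h4 : Tendsto (deriv fm) (𝓝[<] x₀) (𝓝 (deriv fm x₀)) :=
      (((contDiff_one hfm).continuous_deriv le_rfl).tendsto x₀).mono_left nhdsWithin_le_nhds
    exact tendsto_nhds_unique h3 h4
  have hRight : deriv g x₀ = deriv fp x₀ := by
    have hL : Tendsto (deriv g) (𝓝[>] x₀) (𝓝 (deriv g x₀)) :=
      hgc.tendsto.mono_left nhdsWithin_le_nhds
    have hEq : deriv g =ᶠ[𝓝[>] x₀] deriv fp := by
      filter_upwards [mem_nhdsWithin_of_mem_nhds hVmem, self_mem_nhdsWithin] with y hyV hygt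
      rw [key y hyV (ne_of_gt hygt), pd]
      simp [if_neg (not_lt.2 (le_of_lt (mem_Ioi.1 hygt)))]
    have h3 : Tendsto (deriv fp) (𝓝[>] x₀) (𝓝 (deriv g x₀)) := hL.congr' hEq
    have h4 : Tendsto (deriv fp) (𝓝[>] x₀) (𝓝 (deriv fp x₀)) :=
      (((contDiff_one hfp).continuous_deriv le_rfl).tendsto x₀).mono_left nhdsWithin_le_nhds
    exact tendsto_nhds_unique h3 h4
  exact hne (hLeft ▸ hRight)


/-- If the one-sided first derivatives agree, `r = 0` is in `N_{C¹}`. -/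
lemma conv_zero_mem {φ : ℝ → ℝ} (hφ : IsMollifier φ)
    {f fm fp : ℝ → ℝ} (hfm : ContDiff ℝ (⊤ : ℕ∞) fm) (hfp : ContDiff ℝ (⊤ : ℕ∞) fp)
    (hfml : ∀ x ≤ x₀, f x = fm x) (hfpr : ∀ x, x₀ ≤ x → f x = fp x)
    (hde : deriv fm x₀ = deriv fp x₀) :
    (0:ℝ) ∈ NC1 (fun ε x => ∫ t : ℝ, f t * scaled φ ε (x - t)) x₀ := by
  obtain ⟨R, hR0, hR⟩ := moll_R hφ
  have hf_cont : Continuous f := f_cont hfm hfp hfml hfpr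
  have hfd : ∀ x : ℝ, HasDerivAt f (pd x₀ fm fp x) x := by
    intro x
    rcases lt_trichotomy x x₀ with h | h | h
    · have hev : f =ᶠ[𝓝 x] fm := by
        filter_upwards [Iio_mem_nhds h] with y hy using hfml y (le_of_lt hy)
      have := ((((contDiff_one hfm).differentiable one_ne_zero) x).hasDerivAt).congr_of_eventuallyEq hev
      rw [pd]; simpa [if_pos h] using this
    · subst h
      have h1 : HasDerivWithinAt f (deriv fm x) (Iic x) x := by
        refine ((((contDiff_one hfm).differentiable one_ne_zero) x).hasDerivAt.hasDerivWithinAt).congr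
          (fun y hy => hfml y hy) (hfml x le_rfl)
      have h2 : HasDerivWithinAt f (deriv fm x) (Ici x) x := by
        rw [hde]
        refine ((((contDiff_one hfp).differentiable one_ne_zero) x).hasDerivAt.hasDerivWithinAt).congr
          (fun y hy => hfpr y hy) (hfpr x le_rfl)
      have h3 := h1.union h2
      rw [Iic_union_Ici] at h3
      have h4 := hasDerivWithinAt_univ.1 h3
      rw [pd]
      simpa [if_neg (lt_irrefl x), ← hde] using h4
    · have hev : f =ᶠ[𝓝 x] fp := by
        filter_upwards [Ioi_mem_nhds h] with y hy using hfpr y (le_of_lt hy)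
      have := ((((contDiff_one hfp).differentiable one_ne_zero) x).hasDerivAt).congr_of_eventuallyEq hev
      rw [pd]; simpa [if_neg (not_lt.2 h.le)] using this
  have hderiv_f : deriv f = pd x₀ fm fp := funext fun x => (hfd x).deriv
  have hfC1 : ContDiff ℝ 1 f := by
    rw [contDiff_one_iff_deriv]
    exact ⟨fun x => (hfd x).differentiableAt, by rw [hderiv_f]; exact pd_cont hfm hfp hde⟩
  refine ⟨le_rfl, Ioo (x₀ - 1) (x₀ + 1), isOpen_Ioo, ⟨by linarith, by linarith⟩, f,
    hfC1.contDiffOn, ?_⟩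
  intro K hKV hK δ hδ
  obtain ⟨ε₁, hε₁, h1⟩ := moll_uniform hφ hR0 hR hf_cont (A := 1) zero_le_one hδ x₀
  obtain ⟨ε₂, hε₂, h2⟩ := moll_uniform hφ hR0 hR (pd_cont hfm hfp hde) (A := 1) zero_le_one hδ x₀
  refine ⟨min ε₁ ε₂, lt_min hε₁ hε₂, fun ε hε hεlt x hx => ?_⟩
  have hx1 : |x - x₀| ≤ 1 := by
    have := hKV hx
    rw [mem_Ioo] at this
    rw [abs_le]; constructor <;> linarith [this.1, this.2]
  constructor
  · simp only [Real.rpow_zero, one_mul, conv_repr φ f hε x]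
    exact h1 ε hε (hεlt.trans_le (min_le_left _ _)) x hx1
  · rw [Real.rpow_zero, one_mul, conv_deriv_eq hφ hfm hfp hfml hfpr hε x, hderiv_f]
    exact h2 ε hε (hεlt.trans_le (min_le_right _ _)) x hx1


lemma iter_cs {φ : ℝ → ℝ} (hcs : HasCompactSupport φ) (m : ℕ) :
    HasCompactSupport (deriv^[m] φ) := by
  induction m with
  | zero => exact hcs
  | succ k ih => rw [Function.iterate_succ_apply']; exact ih.deriv

lemma iter_cont {φ : ℝ → ℝ} (hsm : ContDiff ℝ (⊤ : ℕ∞) φ) (m : ℕ) :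
    Continuous (deriv^[m] φ) := (hsm.iterate_deriv m).continuous

lemma iter_zero_outside {φ : ℝ → ℝ} {R : ℝ} (hR : ∀ u : ℝ, R ≤ |u| → φ u = 0) (m : ℕ) :
    ∀ u : ℝ, R < |u| → deriv^[m] φ u = 0 := by
  induction m with
  | zero => exact fun u hu => hR u hu.le
  | succ k ih =>
    intro u hu
    rw [Function.iterate_succ_apply']
    have hop : IsOpen {y : ℝ | R < |y|} := isOpen_lt continuous_const continuous_abs
    have hev : deriv^[k] φ =ᶠ[𝓝 u] fun _ => (0:ℝ) := by
      filter_upwards [hop.mem_nhds hu] with y hy using ih y hy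
    rw [hev.deriv_eq, deriv_const]

lemma iter_bound {φ : ℝ → ℝ} (hsm : ContDiff ℝ (⊤ : ℕ∞) φ) {R : ℝ} (hR0 : 0 < R)
    (hR : ∀ u : ℝ, R ≤ |u| → φ u = 0) (m : ℕ) :
    ∃ C : ℝ, 0 < C ∧ ∀ u : ℝ, |deriv^[m] φ u| ≤ C := by
  obtain ⟨C, hC⟩ := (isCompact_Icc (a := -R) (b := R)).exists_bound_of_continuousOn
    (iter_cont hsm m).continuousOn
  refine ⟨max C 0 + 1, by positivity, fun u => ?_⟩
  rcases le_or_gt R |u| with h | h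
  · rcases eq_or_lt_of_le h with h' | h'
    · -- |u| = R, so u ∈ Icc
      have hu : u ∈ Icc (-R) R := by
        have := abs_le.1 h'.symm.le
        exact ⟨this.1, this.2⟩
      have := hC u hu
      rw [Real.norm_eq_abs] at this
      have := le_max_left C 0
      linarith [hC u hu, le_max_left C 0]
    · rw [iter_zero_outside hR m u h']
      simp
      positivity
  · have hu : u ∈ Icc (-R) R := by
      have := abs_le.1 h.le
      exact ⟨this.1, this.2⟩
    have h2 := hC u hu
    rw [Real.norm_eq_abs] at h2
    have := le_max_left C 0
    linarith

lemma exists_iter_ne {φ : ℝ → ℝ} (hφ : IsMollifier φ) (m : ℕ) :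
    ∃ c : ℝ, c ≠ 0 ∧ deriv^[m] φ c ≠ 0 := by
  obtain ⟨hsm, hcs, hpos, hint⟩ := hφ
  have main : ∃ c : ℝ, deriv^[m] φ c ≠ 0 := by
    by_contra h
    push_neg at h
    have hzero : ∀ j : ℕ, j ≤ m → ∀ x : ℝ, deriv^[m - j] φ x = 0 := by
      intro j
      induction j with
      | zero => intro _ x; simpa using h x
      | succ k ih =>
        intro hk x
        have h1 : ∀ x : ℝ, deriv^[m - k] φ x = 0 := ih (Nat.le_of_succ_le hk)
        have h2 : m - k = (m - (k + 1)) + 1 := by omega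
        have h3 : ∀ x : ℝ, deriv (deriv^[m - (k+1)] φ) x = 0 := by
          intro y
          have := h1 y
          rw [h2, Function.iterate_succ_apply'] at this
          exact this
        have hdiff : Differentiable ℝ (deriv^[m - (k+1)] φ) :=
          (hsm.iterate_deriv _).differentiable (by simp)
        have hconst := is_const_of_deriv_eq_zero hdiff h3
        -- the function has compact support, so it is zero somewhere
        have hne : tsupport (deriv^[m - (k+1)] φ) ≠ univ := (iter_cs hcs _).ne_univ
        obtain ⟨z, hz⟩ : ∃ z, z ∉ tsupport (deriv^[m - (k+1)] φ) := by
          by_contra hall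
          push_neg at hall
          exact hne (eq_univ_of_forall hall)
        have hz0 : deriv^[m - (k+1)] φ z = 0 := image_eq_zero_of_notMem_tsupport hz
        rw [← hz0]
        exact hconst x z
    have hφ0 : ∀ x : ℝ, φ x = 0 := by
      have := hzero m le_rfl
      simpa using this
    have hfz : φ = fun _ => (0:ℝ) := funext hφ0
    rw [hfz] at hint
    simp at hint
  obtain ⟨c₀, hc₀⟩ := main
  by_cases h0 : c₀ ≠ 0
  · exact ⟨c₀, h0, hc₀⟩
  · push_neg at h0
    subst h0
    have hcont : ContinuousAt (deriv^[m] φ) 0 := (iter_cont hsm m).continuousAt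
    have hev : ∀ᶠ y in 𝓝 (0:ℝ), deriv^[m] φ y ≠ 0 := hcont.eventually_ne hc₀
    obtain ⟨η, hη, hball⟩ := Metric.eventually_nhds_iff.1 hev
    refine ⟨η / 2, by positivity, hball ?_⟩
    rw [Real.dist_eq, sub_zero, abs_of_pos (by positivity : (0:ℝ) < η/2)]
    linarith


lemma scaled_iter {φ : ℝ → ℝ} (hsm : ContDiff ℝ (⊤ : ℕ∞) φ) (k : ℕ) {ε : ℝ} (hε : 0 < ε) :
    deriv^[k] (scaled φ ε) = fun y => (ε⁻¹) ^ (k + 1) * deriv^[k] φ (y / ε) := by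
  induction k with
  | zero => funext y; simp [scaled]
  | succ k ih =>
    rw [Function.iterate_succ_apply', ih]
    funext y
    have hg : Differentiable ℝ (deriv^[k] φ) :=
      (hsm.iterate_deriv k).differentiable (by simp)
    have h1 : HasDerivAt (fun y : ℝ => y / ε) ε⁻¹ y := by
      simpa using (hasDerivAt_id y).div_const ε
    have h2 : HasDerivAt (deriv^[k] φ) (deriv (deriv^[k] φ) (y / ε)) (y / ε) :=
      (hg _).hasDerivAt
    have h3 : HasDerivAt (fun y : ℝ => deriv^[k] φ (y / ε))
        (deriv (deriv^[k] φ) (y / ε) * ε⁻¹) y := h2.comp y h1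
    have h4 := (h3.const_mul ((ε⁻¹) ^ (k + 1))).deriv
    rw [h4, Function.iterate_succ_apply']
    ring

lemma partb_deriv_eq {φ : ℝ → ℝ} (x₀ : ℝ) (ε : ℝ) (k : ℕ) (x : ℝ) :
    deriv (fun x => deriv^[k] (scaled φ ε) (x - x₀)) x
      = deriv^[k + 1] (scaled φ ε) (x - x₀) := by
  rw [deriv_comp_sub_const, Function.iterate_succ_apply']

lemma rpow_sub_natCast {ε : ℝ} (hε : 0 < ε) (r : ℝ) (m : ℕ) :
    ε ^ r * (ε⁻¹) ^ m = ε ^ (r - (m : ℝ)) := by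
  rw [inv_pow, ← Real.rpow_natCast ε m, ← Real.rpow_neg hε.le, ← Real.rpow_add hε,
    sub_eq_add_neg]


lemma partb_mem {φ : ℝ → ℝ} (hφ : IsMollifier φ) (x₀ : ℝ) {k : ℕ} {r : ℝ}
    (hr : (k : ℝ) + 2 < r) :
    r ∈ NC1 (fun ε x => deriv^[k] (scaled φ ε) (x - x₀)) x₀ := by
  obtain ⟨R, hR0, hR⟩ := moll_R hφ
  have hsm := hφ.1
  obtain ⟨Ck, hCk0, hCk⟩ := iter_bound hsm hR0 hR k
  obtain ⟨Ck1, hCk10, hCk1⟩ := iter_bound hsm hR0 hR (k + 1)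
  set C := max Ck Ck1 with hC
  have hC0 : 0 < C := lt_of_lt_of_le hCk0 (le_max_left _ _)
  set q := r - ((k : ℝ) + 2) with hq
  have hq0 : 0 < q := by simp only [hq]; linarith
  have hr0 : 0 ≤ r := le_of_lt (lt_of_le_of_lt (by positivity) hr)
  refine ⟨hr0, univ, isOpen_univ, mem_univ _, fun _ => 0, contDiffOn_const, ?_⟩
  intro K hKV hK δ hδ
  refine ⟨min 1 ((δ / C) ^ q⁻¹), lt_min one_pos (Real.rpow_pos_of_pos (by positivity) _),
    fun ε hε hεlt x hx => ?_⟩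
  have hε1 : ε ≤ 1 := le_of_lt (lt_of_lt_of_le hεlt (min_le_left _ _))
  have hεq : ε < (δ / C) ^ q⁻¹ := lt_of_lt_of_le hεlt (min_le_right _ _)
  have hsmall : ε ^ q * C ≤ δ := rpow_small hq0 hδ hC0 hε hεq
  have hmono : ε ^ (r - ((k : ℝ) + 1)) ≤ ε ^ q := by
    apply Real.rpow_le_rpow_of_exponent_ge hε hε1
    simp only [hq]; linarith
  have hqnn : 0 ≤ ε ^ q := Real.rpow_nonneg hε.le q
  constructor
  · show |ε ^ r * deriv^[k] (scaled φ ε) (x - x₀) - (0:ℝ)| ≤ δ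
    rw [sub_zero]
    have he : deriv^[k] (scaled φ ε) (x - x₀) = (ε⁻¹) ^ (k + 1) * deriv^[k] φ ((x - x₀) / ε) := by
      rw [scaled_iter hsm k hε]
    rw [he, ← mul_assoc, abs_mul, abs_mul]
    rw [abs_of_nonneg (Real.rpow_nonneg hε.le r), abs_of_nonneg (by positivity)]
    rw [rpow_sub_natCast hε r (k + 1)]
    have hcast : ((k + 1 : ℕ) : ℝ) = (k : ℝ) + 1 := by push_cast; ring
    rw [hcast]
    calc ε ^ (r - ((k:ℝ)+1)) * |deriv^[k] φ ((x - x₀) / ε)|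
        ≤ ε ^ q * C := by
          apply mul_le_mul hmono ((hCk _).trans (le_max_left _ _)) (abs_nonneg _) hqnn
      _ ≤ δ := hsmall
  · show |ε ^ r * deriv (fun x => deriv^[k] (scaled φ ε) (x - x₀)) x - deriv (fun _ => (0:ℝ)) x| ≤ δ
    rw [partb_deriv_eq x₀ ε k x, deriv_const, sub_zero]
    have he : deriv^[k+1] (scaled φ ε) (x - x₀)
        = (ε⁻¹) ^ (k + 2) * deriv^[k+1] φ ((x - x₀) / ε) := by
      rw [scaled_iter hsm (k+1) hε]
    rw [he, ← mul_assoc, abs_mul, abs_mul]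
    rw [abs_of_nonneg (Real.rpow_nonneg hε.le r), abs_of_nonneg (by positivity)]
    rw [rpow_sub_natCast hε r (k + 2)]
    have hcast : ((k + 2 : ℕ) : ℝ) = (k : ℝ) + 2 := by push_cast; ring
    rw [hcast, ← hq]
    calc ε ^ q * |deriv^[k+1] φ ((x - x₀) / ε)|
        ≤ ε ^ q * C :=
          mul_le_mul_of_nonneg_left ((hCk1 _).trans (le_max_right _ _)) hqnn
      _ ≤ δ := hsmall


lemma partb_not_mem {φ : ℝ → ℝ} (hφ : IsMollifier φ) (x₀ : ℝ) {k : ℕ} {r : ℝ}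
    (hr : r ≤ (k : ℝ) + 2) :
    r ∉ NC1 (fun ε x => deriv^[k] (scaled φ ε) (x - x₀)) x₀ := by
  obtain ⟨R, hR0, hR⟩ := moll_R hφ
  have hsm := hφ.1
  rintro ⟨hr0, V, hV, hx₀V, g, hg, hconv⟩
  obtain ⟨c, hc0, hc⟩ := exists_iter_ne hφ (k + 1)
  -- deriv of the family, in general
  have hwderiv : ∀ {ε : ℝ}, 0 < ε → ∀ x : ℝ,
      deriv (fun x => deriv^[k] (scaled φ ε) (x - x₀)) x
        = (ε⁻¹) ^ (k + 2) * deriv^[k + 1] φ ((x - x₀) / ε) := by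
    intro ε hε x
    rw [partb_deriv_eq x₀ ε k x, scaled_iter hsm (k + 1) hε]
  -- Step 1 : deriv g vanishes away from x₀
  have key : ∀ x ∈ V, x ≠ x₀ → deriv g x = 0 := by
    intro x hxV hxne
    have hd0 : 0 < |x - x₀| := abs_pos.2 (sub_ne_zero.2 hxne)
    apply eq_of_forall_dist_le
    intro δ hδ
    obtain ⟨ε₀, hε₀p, hcv⟩ := hconv {x} (singleton_subset_iff.2 hxV) isCompact_singleton δ hδ
    have hminp : 0 < min ε₀ (|x - x₀| / (R + 1)) :=
      lt_min hε₀p (by positivity)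
    set ε := min ε₀ (|x - x₀| / (R + 1)) / 2 with hεdef
    have hεpos : 0 < ε := half_pos hminp
    have hεhalf : ε < min ε₀ (|x - x₀| / (R + 1)) := half_lt_self hminp
    have h1 := (hcv ε hεpos (hεhalf.trans_le (min_le_left _ _)) x rfl).2
    have hout : R < |(x - x₀) / ε| := by
      rw [abs_div, abs_of_pos hεpos]
      rw [lt_div_iff₀ hεpos]
      have h2 : ε < |x - x₀| / (R + 1) := hεhalf.trans_le (min_le_right _ _)
      calc R * ε < R * (|x - x₀| / (R + 1)) := by
            apply mul_lt_mul_of_pos_left h2 hR0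
        _ < |x - x₀| := by
            rw [mul_div_assoc', div_lt_iff₀ (by positivity : (0:ℝ) < R + 1)]
            nlinarith

    rw [hwderiv hεpos x, iter_zero_outside (fun u hu => hR u hu) (k + 1) _ hout, mul_zero,
      mul_zero, zero_sub, abs_neg] at h1
    rwa [Real.dist_eq, sub_zero]
  -- Step 2 : deriv g x₀ = 0
  have hgc : ContinuousAt (deriv g) x₀ :=
    (hg.continuousOn_deriv_of_isOpen hV le_rfl).continuousAt (hV.mem_nhds hx₀V)
  have h0 : deriv g x₀ = 0 := by
    have h1 : Tendsto (deriv g) (𝓝[≠] x₀) (𝓝 (deriv g x₀)) :=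
      hgc.tendsto.mono_left nhdsWithin_le_nhds
    have h2 : deriv g =ᶠ[𝓝[≠] x₀] fun _ => (0:ℝ) := by
      filter_upwards [mem_nhdsWithin_of_mem_nhds (hV.mem_nhds hx₀V), self_mem_nhdsWithin]
        with y hyV hyne using key y hyV hyne
    exact tendsto_nhds_unique (h1.congr' h2) tendsto_const_nhds
  -- Step 3 : contradiction near x₀
  set δ := |deriv^[k + 1] φ c| / 4 with hδdef
  have hδ : 0 < δ := by
    have := abs_pos.2 hc
    positivity
  obtain ⟨ρ, hρ, hball⟩ := Metric.isOpen_iff.1 hV x₀ hx₀V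
  have hKV : Icc (x₀ - ρ/2) (x₀ + ρ/2) ⊆ V := by
    intro y hy
    apply hball
    rw [Metric.mem_ball, Real.dist_eq]
    rw [mem_Icc] at hy
    rw [abs_lt]
    constructor <;> linarith
  obtain ⟨ε₀, hε₀p, hcv⟩ := hconv _ hKV isCompact_Icc δ hδ
  obtain ⟨η, hη, hcont⟩ := Metric.continuousAt_iff.1 hgc δ hδ
  have hminp : 0 < min (min ε₀ 1) (min (ρ / (2 * (|c| + 1))) (η / (|c| + 1))) := by
    apply lt_min (lt_min hε₀p one_pos)
    apply lt_min <;> positivity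
  set ε := min (min ε₀ 1) (min (ρ / (2 * (|c| + 1))) (η / (|c| + 1))) / 2 with hεdef
  have hεpos : 0 < ε := half_pos hminp
  have hεhalf := half_lt_self hminp
  have hεlt₀ : ε < ε₀ := hεhalf.trans_le ((min_le_left _ _).trans (min_le_left _ _))
  have hε1 : ε ≤ 1 := (hεhalf.trans_le ((min_le_left _ _).trans (min_le_right _ _))).le
  have hερ : ε < ρ / (2 * (|c| + 1)) :=
    hεhalf.trans_le ((min_le_right _ _).trans (min_le_left _ _))
  have hεη : ε < η / (|c| + 1) :=
    hεhalf.trans_le ((min_le_right _ _).trans (min_le_right _ _))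
  set x := x₀ + ε * c with hxdef
  have hxc : |x - x₀| ≤ ε * (|c| + 1) := by
    rw [hxdef, add_sub_cancel_left, abs_mul, abs_of_pos hεpos]
    have : |c| ≤ |c| + 1 := by linarith
    exact mul_le_mul_of_nonneg_left this hεpos.le
  have hxK : x ∈ Icc (x₀ - ρ/2) (x₀ + ρ/2) := by
    have h1 : ε * (|c| + 1) ≤ ρ / 2 := by
      have := mul_le_mul_of_nonneg_right hερ.le (by positivity : (0:ℝ) ≤ |c| + 1)
      calc ε * (|c| + 1) ≤ (ρ / (2 * (|c| + 1))) * (|c| + 1) := this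
        _ = ρ / 2 := by field_simp
    have h2 := abs_le.1 (hxc.trans h1)
    rw [mem_Icc]
    constructor <;> linarith
  have h1 := (hcv ε hεpos hεlt₀ x hxK).2
  have hxcε : (x - x₀) / ε = c := by
    rw [hxdef, add_sub_cancel_left]
    exact mul_div_cancel_left₀ c hεpos.ne'
  rw [hwderiv hεpos x, hxcε, ← mul_assoc] at h1
  have h2 : |deriv g x| ≤ δ := by
    have hd : dist x x₀ < η := by
      rw [Real.dist_eq]
      calc |x - x₀| ≤ ε * (|c| + 1) := hxc
        _ < (η / (|c| + 1)) * (|c| + 1) :=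
            mul_lt_mul_of_pos_right hεη (by positivity)
        _ = η := div_mul_cancel₀ η (by positivity)
    have := hcont hd
    rw [Real.dist_eq, h0, sub_zero] at this
    exact this.le
  have h3 : (1:ℝ) ≤ ε ^ r * (ε⁻¹) ^ (k + 2) := by
    rw [rpow_sub_natCast hεpos r (k + 2)]
    apply Real.one_le_rpow_of_pos_of_le_one_of_nonpos hεpos hε1
    push_cast
    linarith
  have h4 : 4 * δ ≤ |ε ^ r * (ε⁻¹) ^ (k + 2) * deriv^[k + 1] φ c| := by
    rw [abs_mul]
    have h5 : 4 * δ = |deriv^[k + 1] φ c| := by rw [hδdef]; ring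
    rw [h5]
    calc |deriv^[k+1] φ c| = 1 * |deriv^[k+1] φ c| := (one_mul _).symm
      _ ≤ |ε ^ r * ε⁻¹ ^ (k + 2)| * |deriv^[k+1] φ c| :=
          mul_le_mul_of_nonneg_right (le_trans h3 (le_abs_self _)) (abs_nonneg _)
  have h6 : |ε ^ r * ε⁻¹ ^ (k + 2) * deriv^[k+1] φ c|
      ≤ |ε ^ r * ε⁻¹ ^ (k + 2) * deriv^[k+1] φ c - deriv g x| + |deriv g x| := by
    calc |ε ^ r * ε⁻¹ ^ (k + 2) * deriv^[k+1] φ c|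
        = |(ε ^ r * ε⁻¹ ^ (k + 2) * deriv^[k+1] φ c - deriv g x) + deriv g x| := by
          rw [sub_add_cancel]
      _ ≤ _ := abs_add_le _ _
  linarith


lemma strength_zero_iff {fm fp : ℝ → ℝ} (hval : fm x₀ = fp x₀) :
    HasStrength fm fp x₀ 0 ↔ deriv fm x₀ ≠ deriv fp x₀ := by
  constructor
  · rintro (⟨h, -⟩ | ⟨-, -, h⟩)
    · exact absurd h (by decide)
    · simpa using h
  · intro hne
    right
    refine ⟨le_rfl, fun j hj => ?_, by simpa using hne⟩
    have hj0 : j = 0 := by omega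
    subst hj0
    simpa using hval


end Stmt18

open Stmt18 in
/-- (a) For `f` piecewise smooth across `x₀`, the strength of the
singularity of `f` at `x₀` equals `−n` iff the `C^1`-singular spectrum of the family of
regularizations `f * φ_ε` is `[0,n]`. (b) The embedding of `∂^k δ(x−x₀)` (of strength
`−k−2`) has `C^1`-singular spectrum `[0, k+2]`. -/
theorem stmt18 (x₀ : ℝ) (φ : ℝ → ℝ) (hφ : IsMollifier φ) :
    (∀ f fm fp : ℝ → ℝ, ContDiff ℝ (⊤ : ℕ∞) fm → ContDiff ℝ (⊤ : ℕ∞) fp →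
      (∀ x ≤ x₀, f x = fm x) → (∀ x, x₀ ≤ x → f x = fp x) →
      ∀ n : ℕ,
        (HasStrength fm fp x₀ (-(n : ℤ)) ↔
          SigmaC1 (fun ε x => ∫ t : ℝ, f t * scaled φ ε (x - t)) x₀
            = Set.Icc 0 (n : ℝ))) ∧
    (∀ k : ℕ,
      SigmaC1 (fun ε x => deriv^[k] (scaled φ ε) (x - x₀)) x₀
        = Set.Icc 0 ((k : ℝ) + 2)) := by
  constructor
  · intro f fm fp hfm hfp hfml hfpr n
    have hval : fm x₀ = fp x₀ := by rw [← hfml x₀ le_rfl, hfpr x₀ le_rfl]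
    rcases Nat.eq_zero_or_pos n with hn | hn
    · subst hn
      simp only [Nat.cast_zero, neg_zero]
      constructor
      · intro hs
        have hne : deriv fm x₀ ≠ deriv fp x₀ := (strength_zero_iff hval).1 hs
        ext r
        simp only [SigmaC1, Set.mem_diff, Set.mem_setOf_eq, Set.mem_Icc]
        constructor
        · rintro ⟨hr0, hrn⟩
          refine ⟨hr0, ?_⟩
          by_contra hpos
          push_neg at hpos
          exact hrn (conv_pos_mem hφ hfm hfp hfml hfpr hpos)
        · rintro ⟨hr0, hr⟩
          have hr00 : r = 0 := le_antisymm hr hr0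
          subst hr00
          exact ⟨le_rfl, conv_zero_not_mem hφ hfm hfp hfml hfpr hne⟩
      · intro hSig
        rw [strength_zero_iff hval]
        intro hde
        have h0 : (0:ℝ) ∈ NC1 (fun ε x => ∫ t : ℝ, f t * scaled φ ε (x - t)) x₀ :=
          conv_zero_mem hφ hfm hfp hfml hfpr hde
        have hmem : (0:ℝ) ∈ Set.Icc (0:ℝ) (0:ℝ) := by simp
        rw [← hSig] at hmem
        exact hmem.2 h0
    · constructor
      · rintro (⟨h1, h2⟩ | ⟨h1, -, -⟩)
        · exact absurd hval h2
        · exfalso; omega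
      · intro hSig
        exfalso
        have hmem : ((n:ℝ)) ∈ Set.Icc (0:ℝ) (n:ℝ) := by
          simp [Nat.cast_nonneg]
        rw [← hSig] at hmem
        exact hmem.2 (conv_pos_mem hφ hfm hfp hfml hfpr (by exact_mod_cast hn))
  · intro k
    ext r
    simp only [SigmaC1, Set.mem_diff, Set.mem_setOf_eq, Set.mem_Icc]
    constructor
    · rintro ⟨hr0, hrn⟩
      refine ⟨hr0, ?_⟩
      by_contra hgt
      push_neg at hgt
      exact hrn (partb_mem hφ x₀ hgt)
    · rintro ⟨hr0, hle⟩
      exact ⟨hr0, partb_not_mem hφ x₀ hle⟩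


end
end

section
/- Let m, n ≥ 1 be integers and φ a mollifier on ℝ. For ε ∈ (0,1] define u_ε(x,t) = (φ_ε(x + 1 − t))^m, v_ε(x,t) = (φ_ε(x − 1 + t))^n, and w_ε(x,t) = ∫_0^t u_ε(x,s) v_ε(x,s) ds for (x,t) ∈ ℝ × [0,∞) (so that (u_ε, v_ε, w_ε) solves (∂_t + ∂_x)u = 0, u(·,0) = φ_ε^m(·+1); (∂_t − ∂_x)v = 0, v(·,0) = φ_ε^n(·−1); ∂_t w = u·v, w(·,0) = 0). Then: (i) every point (x,t) with x ≠ 0 and t ≥ 0, as well as every point (0,t) with 0 ≤ t < 1, has an open neighbourhood V in ℝ × [0,∞) and an ε₀ > 0 such that w_ε vanishes identically on V for all ε < ε₀; (ii) for every t ≥ 1, Σ_{C^1,(0,t)}((w_ε)) ⊆ [0, m+n]: for every real r > m+n there exist an open neighbourhood V of (0,t) in ℝ × [0,∞) and g ∈ C^1(V) such that ε^r w_ε → g in C^1(V) as ε → 0. -/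
open Real MeasureTheory

noncomputable section

/-- The first component of the solution: `u_ε(x,t) = (φ_ε(x+1−t))^m`. -/
noncomputable def uSol (φ : ℝ → ℝ) (m : ℕ) (ε : ℝ) : ℝ × ℝ → ℝ :=
  fun p => (scaled φ ε (p.1 + 1 - p.2)) ^ m

/-- The second component of the solution: `v_ε(x,t) = (φ_ε(x−1+t))^n`. -/
noncomputable def vSol (φ : ℝ → ℝ) (n : ℕ) (ε : ℝ) : ℝ × ℝ → ℝ :=
  fun p => (scaled φ ε (p.1 - 1 + p.2)) ^ n

/-- The third component: `w_ε(x,t) = ∫_0^t u_ε(x,s)·v_ε(x,s) ds`. -/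
noncomputable def wSol (φ : ℝ → ℝ) (m n : ℕ) (ε : ℝ) : ℝ × ℝ → ℝ :=
  fun p => ∫ s in (0:ℝ)..p.2, uSol φ m ε (p.1, s) * vSol φ n ε (p.1, s)

/-- The closed half-plane `ℝ × [0,∞)`. -/
def HalfPlane : Set (ℝ × ℝ) := {p : ℝ × ℝ | 0 ≤ p.2}

lemma aux_abs_mul_sub_mul (a b a' b' : ℝ) :
    |a * b - a' * b'| ≤ |a - a'| * |b| + |a'| * |b - b'| := by
  have h : a * b - a' * b' = (a - a') * b + a' * (b - b') := by ring
  rw [h]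
  exact (abs_add_le _ _).trans (by rw [abs_mul, abs_mul])

lemma aux_eps (A δ σ : ℝ) (hσ : 0 < σ) (hδ : 0 < δ) :
    ∃ ε₀ > (0:ℝ), ∀ ε : ℝ, 0 < ε → ε < ε₀ → A * ε ^ σ ≤ δ := by
  rcases le_or_gt A 0 with hA | hA
  · exact ⟨1, one_pos, fun ε hε _ =>
      (mul_nonpos_of_nonpos_of_nonneg hA (Real.rpow_nonneg hε.le σ)).trans hδ.le⟩
  · refine ⟨min 1 ((δ / A) ^ σ⁻¹), lt_min one_pos (Real.rpow_pos_of_pos (by positivity) _), ?_⟩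
    intro ε hε hlt
    have h1 : ε ^ σ ≤ ((δ / A) ^ σ⁻¹) ^ σ :=
      Real.rpow_le_rpow hε.le (hlt.le.trans (min_le_right _ _)) hσ.le
    have h2 : (((δ / A) ^ σ⁻¹ : ℝ)) ^ σ = δ / A := by
      rw [← Real.rpow_mul (by positivity), inv_mul_cancel₀ hσ.ne', Real.rpow_one]
    rw [h2] at h1
    calc A * ε ^ σ ≤ A * (δ / A) := mul_le_mul_of_nonneg_left h1 hA.le
      _ = δ := by field_simp

lemma aux_rpow (ε : ℝ) (hε : 0 < ε) (r : ℝ) (k : ℕ) : ε ^ r * ε⁻¹ ^ k = ε ^ (r - k) := by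
  rw [← Real.rpow_natCast ε⁻¹ k, Real.inv_rpow hε.le, ← Real.rpow_neg hε.le, ← Real.rpow_add hε,
    sub_eq_add_neg]

/-- For the explicit solution of the Rauch–Reed `3×3` system with
initial data `δ^m(x+1)` and `δ^n(x−1)`: (i) `w_ε` vanishes, for small `ε`, on a
(relative) neighbourhood of every point `(x,t)` with `x ≠ 0`, `t ≥ 0`, and of every
point `(0,t)` with `0 ≤ t < 1`; (ii) for `t ≥ 1` the `C^1`-singular spectrum of `w`
at `(0,t)` is contained in `[0, m+n]`: for every `r > m+n` some `ε^r·w_ε` converges in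
`C^1` near `(0,t)` to a `C^1` function. -/
theorem stmt19 (m n : ℕ) (hm : 1 ≤ m) (hn : 1 ≤ n)
    (φ : ℝ → ℝ) (hφ : IsMollifier φ) :
    -- (i)
    (∀ p : ℝ × ℝ, 0 ≤ p.2 → (p.1 ≠ 0 ∨ p.2 < 1) →
      ∃ U : Set (ℝ × ℝ), IsOpen U ∧ p ∈ U ∧
        ∃ ε₀ > (0:ℝ), ∀ ε : ℝ, 0 < ε → ε < ε₀ →
          ∀ q ∈ U ∩ HalfPlane, wSol φ m n ε q = 0) ∧
    -- (ii)
    (∀ t : ℝ, 1 ≤ t → ∀ r : ℝ, (m + n : ℝ) < r →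
      ∃ U : Set (ℝ × ℝ), IsOpen U ∧ ((0:ℝ), t) ∈ U ∧
        ∃ g : ℝ × ℝ → ℝ, ContDiffOn ℝ 1 g (U ∩ HalfPlane) ∧
          ∀ K ⊆ U ∩ HalfPlane, IsCompact K → ∀ δ > (0:ℝ), ∃ ε₀ > (0:ℝ),
            ∀ ε : ℝ, 0 < ε → ε < ε₀ → ∀ q ∈ K,
              |ε ^ r * wSol φ m n ε q - g q| ≤ δ ∧
              ‖ε ^ r • fderivWithin ℝ (wSol φ m n ε) (U ∩ HalfPlane) q -
                  fderivWithin ℝ g (U ∩ HalfPlane) q‖ ≤ δ) := by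
  obtain ⟨hsmooth, hsupp, hpos, hint⟩ := hφ
  have hcont : Continuous φ := hsmooth.continuous
  -- radius of support
  obtain ⟨R₀, hR₀⟩ := hsupp.isBounded.subset_closedBall 0
  set R : ℝ := max R₀ 1 with hRdef
  have hR : (0:ℝ) < R := lt_of_lt_of_le one_pos (le_max_right _ _)
  have hφR : ∀ y : ℝ, R < |y| → φ y = 0 := by
    intro y hy
    apply image_eq_zero_of_notMem_tsupport
    intro hmem
    have := hR₀ hmem
    rw [Metric.mem_closedBall, Real.dist_eq, sub_zero] at this
    exact absurd (this.trans (le_max_left _ _)) (not_le.2 hy)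
  -- sup bound
  obtain ⟨M₀, hM₀⟩ := hsupp.exists_bound_of_continuous hcont
  set M : ℝ := max M₀ 1 with hMdef
  have hM1 : (0:ℝ) < M := lt_of_lt_of_le one_pos (le_max_right _ _)
  have hM : ∀ y, |φ y| ≤ M := fun y => le_trans (by simpa using hM₀ y) (le_max_left _ _)
  -- Lipschitz constants for powers of φ
  have hψ : ∀ k : ℕ, k ≠ 0 → ∃ K : ℝ, 0 ≤ K ∧
      ∀ y y' : ℝ, |(φ y) ^ k - (φ y') ^ k| ≤ K * |y - y'| := by
    intro k hk
    have hcs : HasCompactSupport (fun y => (φ y) ^ k) :=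
      hsupp.comp_left (g := fun t : ℝ => t ^ k) (by simp [zero_pow hk])
    have hcd : ContDiff ℝ (⊤ : ℕ∞) (fun y => (φ y) ^ k) := hsmooth.pow k
    obtain ⟨K, hK⟩ := hcd.lipschitzWith_of_hasCompactSupport hcs (by simp)
    refine ⟨K, K.coe_nonneg, fun y y' => ?_⟩
    have := hK.dist_le_mul y y'
    rwa [Real.dist_eq, Real.dist_eq] at this
  obtain ⟨Km, hKm0, hKm⟩ := hψ m (by omega)
  obtain ⟨Kn, hKn0, hKn⟩ := hψ n (by omega)
  -- pointwise facts about scaled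
  have hscaled_zero : ∀ ε : ℝ, 0 < ε → ∀ y : ℝ, ε * R < |y| → scaled φ ε y = 0 := by
    intro ε hε y hy
    have h1 : R < |y / ε| := by
      rw [abs_div, abs_of_pos hε, lt_div_iff₀ hε]
      linarith [hy]
    simp [scaled, hφR _ h1]
  have hsupport_s : ∀ ε : ℝ, 0 < ε → ∀ x s : ℝ, ε * R < |1 - s| →
      uSol φ m ε (x, s) * vSol φ n ε (x, s) = 0 := by
    intro ε hε x s hs
    have h0 : |(x + 1 - s) - (x - 1 + s)| ≤ |x + 1 - s| + |x - 1 + s| := abs_sub _ _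
    have he : (x + 1 - s) - (x - 1 + s) = 2 * (1 - s) := by ring
    rw [he, abs_mul, abs_two] at h0
    rcases le_or_gt |x + 1 - s| (ε * R) with h | h
    · have h2 : ε * R < |x - 1 + s| := by linarith
      simp [uSol, vSol, hscaled_zero ε hε _ h2, zero_pow (by omega : n ≠ 0)]
    · simp [uSol, vSol, hscaled_zero ε hε _ h, zero_pow (by omega : m ≠ 0)]
  have hsupport_x : ∀ ε : ℝ, 0 < ε → ∀ x s : ℝ, ε * R < |x| →
      uSol φ m ε (x, s) * vSol φ n ε (x, s) = 0 := by
    intro ε hε x s hs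
    have h0 : |(x + 1 - s) + (x - 1 + s)| ≤ |x + 1 - s| + |x - 1 + s| := abs_add_le _ _
    have he : (x + 1 - s) + (x - 1 + s) = 2 * x := by ring
    rw [he, abs_mul, abs_two] at h0
    rcases le_or_gt |x + 1 - s| (ε * R) with h | h
    · have h2 : ε * R < |x - 1 + s| := by linarith
      simp [uSol, vSol, hscaled_zero ε hε _ h2, zero_pow (by omega : n ≠ 0)]
    · simp [uSol, vSol, hscaled_zero ε hε _ h, zero_pow (by omega : m ≠ 0)]
  -- sup bound for the product
  have hprod_bound : ∀ ε : ℝ, 0 < ε → ∀ x s : ℝ,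
      |uSol φ m ε (x, s) * vSol φ n ε (x, s)| ≤ M ^ (m + n) * ε⁻¹ ^ (m + n) := by
    intro ε hε x s
    have h1 : ∀ (k : ℕ) (y : ℝ), |(scaled φ ε y) ^ k| ≤ M ^ k * ε⁻¹ ^ k := by
      intro k y
      rw [abs_pow]
      have h2 : |scaled φ ε y| ≤ M * ε⁻¹ := by
        rw [scaled]
        simp only [abs_mul, abs_of_pos (inv_pos.2 hε)]
        calc ε⁻¹ * |φ (y / ε)| ≤ ε⁻¹ * M :=
              mul_le_mul_of_nonneg_left (hM _) (inv_pos.2 hε).le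
          _ = M * ε⁻¹ := mul_comm _ _
      calc |scaled φ ε y| ^ k ≤ (M * ε⁻¹) ^ k := pow_le_pow_left₀ (abs_nonneg _) h2 k
        _ = M ^ k * ε⁻¹ ^ k := mul_pow _ _ _
    rw [abs_mul]
    calc |uSol φ m ε (x, s)| * |vSol φ n ε (x, s)|
        ≤ (M ^ m * ε⁻¹ ^ m) * (M ^ n * ε⁻¹ ^ n) :=
          mul_le_mul (h1 m _) (h1 n _) (abs_nonneg _) (by positivity)
      _ = M ^ (m + n) * ε⁻¹ ^ (m + n) := by rw [pow_add, pow_add]; ring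
  -- pointwise Lipschitz estimate for the product
  set P : ℝ := Km * M ^ n + M ^ m * Kn with hPdef
  have hP0 : 0 ≤ P := by positivity
  have hlip_pt : ∀ ε : ℝ, 0 < ε → ∀ a a' b b' : ℝ,
      |(scaled φ ε a) ^ m * (scaled φ ε b) ^ n - (scaled φ ε a') ^ m * (scaled φ ε b') ^ n|
        ≤ P * ε⁻¹ ^ (m + n + 1) * max |a - a'| |b - b'| := by
    intro ε hε a a' b b'
    have hsc : ∀ (k : ℕ) (y : ℝ), (scaled φ ε y) ^ k = ε⁻¹ ^ k * (φ (y / ε)) ^ k := by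
      intro k y; rw [scaled, mul_pow]
    rw [hsc, hsc, hsc, hsc]
    have key : (ε⁻¹ ^ m * (φ (a / ε)) ^ m) * (ε⁻¹ ^ n * (φ (b / ε)) ^ n)
        - (ε⁻¹ ^ m * (φ (a' / ε)) ^ m) * (ε⁻¹ ^ n * (φ (b' / ε)) ^ n)
        = ε⁻¹ ^ (m + n) * ((φ (a / ε)) ^ m * (φ (b / ε)) ^ n
            - (φ (a' / ε)) ^ m * (φ (b' / ε)) ^ n) := by
      rw [pow_add]; ring
    rw [key, abs_mul, abs_pow, abs_of_pos (inv_pos.2 hε)]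
    set D : ℝ := max |a - a'| |b - b'| with hDdef
    have hD0 : 0 ≤ D := le_trans (abs_nonneg _) (le_max_left _ _)
    have hdiv : ∀ y y' : ℝ, |y / ε - y' / ε| = |y - y'| * ε⁻¹ := by
      intro y y'
      rw [div_sub_div_same, abs_div, abs_of_pos hε, div_eq_mul_inv]
    have h2 : |(φ (a / ε)) ^ m - (φ (a' / ε)) ^ m| ≤ Km * (D * ε⁻¹) := by
      calc |(φ (a / ε)) ^ m - (φ (a' / ε)) ^ m| ≤ Km * |a / ε - a' / ε| := hKm _ _
        _ = Km * (|a - a'| * ε⁻¹) := by rw [hdiv]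
        _ ≤ Km * (D * ε⁻¹) := by
            apply mul_le_mul_of_nonneg_left _ hKm0
            exact mul_le_mul_of_nonneg_right (le_max_left _ _) (inv_pos.2 hε).le
    have h3 : |(φ (b / ε)) ^ n - (φ (b' / ε)) ^ n| ≤ Kn * (D * ε⁻¹) := by
      calc |(φ (b / ε)) ^ n - (φ (b' / ε)) ^ n| ≤ Kn * |b / ε - b' / ε| := hKn _ _
        _ = Kn * (|b - b'| * ε⁻¹) := by rw [hdiv]
        _ ≤ Kn * (D * ε⁻¹) := by
            apply mul_le_mul_of_nonneg_left _ hKn0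
            exact mul_le_mul_of_nonneg_right (le_max_right _ _) (inv_pos.2 hε).le
    have h4 : |(φ (b / ε)) ^ n| ≤ M ^ n := by
      rw [abs_pow]; exact pow_le_pow_left₀ (abs_nonneg _) (hM _) n
    have h5 : |(φ (a' / ε)) ^ m| ≤ M ^ m := by
      rw [abs_pow]; exact pow_le_pow_left₀ (abs_nonneg _) (hM _) m
    have hX : |(φ (a / ε)) ^ m * (φ (b / ε)) ^ n - (φ (a' / ε)) ^ m * (φ (b' / ε)) ^ n|
        ≤ (Km * (D * ε⁻¹)) * M ^ n + M ^ m * (Kn * (D * ε⁻¹)) := by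
      refine (aux_abs_mul_sub_mul _ _ _ _).trans (add_le_add ?_ ?_)
      · exact mul_le_mul h2 h4 (abs_nonneg _) (by positivity)
      · exact mul_le_mul h5 h3 (abs_nonneg _) (by positivity)
    calc ε⁻¹ ^ (m + n) * |(φ (a / ε)) ^ m * (φ (b / ε)) ^ n
          - (φ (a' / ε)) ^ m * (φ (b' / ε)) ^ n|
        ≤ ε⁻¹ ^ (m + n) * ((Km * (D * ε⁻¹)) * M ^ n + M ^ m * (Kn * (D * ε⁻¹))) :=
          mul_le_mul_of_nonneg_left hX (by positivity)
      _ = P * ε⁻¹ ^ (m + n + 1) * D := by rw [hPdef, pow_succ]; ring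
  -- continuity of the integrand
  have hFcont : ∀ (ε x : ℝ), Continuous (fun s => uSol φ m ε (x, s) * vSol φ n ε (x, s)) := by
    intro ε x
    simp only [uSol, vSol, scaled]
    fun_prop
  -- generic integral estimate exploiting the support in `s`
  have hint_est : ∀ ε : ℝ, 0 < ε → ∀ (F : ℝ → ℝ) (C : ℝ), 0 ≤ C → Continuous F →
      (∀ s, |F s| ≤ C) → (∀ s, ε * R < |1 - s| → F s = 0) →
      ∀ t : ℝ, 0 ≤ t → |∫ s in (0:ℝ)..t, F s| ≤ C * (2 * (ε * R)) := by
    intro ε hε F C hC hFc hFb hF0 t ht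
    set S : Set ℝ := Set.Icc (1 - ε * R) (1 + ε * R) with hSdef
    have hSmeas : MeasurableSet S := measurableSet_Icc
    set H : ℝ → ℝ := S.indicator (fun _ => C) with hHdef
    have hHint : Integrable H := by
      rw [hHdef, integrable_indicator_iff hSmeas]
      exact integrableOn_const (by rw [hSdef, Real.volume_Icc]; exact ENNReal.ofReal_ne_top)
    have hFH : ∀ s, |F s| ≤ H s := by
      intro s
      by_cases hs : s ∈ S
      · rw [hHdef, Set.indicator_of_mem hs]; exact hFb s
      · rw [hHdef, Set.indicator_of_notMem hs]
        have hout : ε * R < |1 - s| := by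
          rw [hSdef, Set.mem_Icc, not_and_or, not_le, not_le] at hs
          rcases hs with h | h
          · exact lt_of_lt_of_le (by linarith) (le_abs_self _)
          · have : ε * R < s - 1 := by linarith
            calc ε * R < s - 1 := this
              _ = -(1 - s) := by ring
              _ ≤ |1 - s| := neg_le_abs _
        rw [hF0 s hout]; simp
    have habs : |∫ s in (0:ℝ)..t, F s| ≤ ∫ s in (0:ℝ)..t, |F s| := by
      have := intervalIntegral.norm_integral_le_integral_norm (f := F) (μ := volume) ht
      simpa [Real.norm_eq_abs] using this
    calc |∫ s in (0:ℝ)..t, F s| ≤ ∫ s in (0:ℝ)..t, |F s| := habs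
      _ ≤ ∫ s in (0:ℝ)..t, H s := by
          apply intervalIntegral.integral_mono_on ht (hFc.abs.intervalIntegrable _ _)
            hHint.intervalIntegrable
          exact fun s _ => hFH s
      _ = ∫ s in Set.Ioc (0:ℝ) t, H s := intervalIntegral.integral_of_le ht
      _ ≤ ∫ s, H s := by
          apply setIntegral_le_integral hHint
          exact Filter.Eventually.of_forall fun s => Set.indicator_nonneg (fun _ _ => hC) s
      _ ≤ C * (2 * (ε * R)) := by
          rw [hHdef, integral_indicator_const C hSmeas, hSdef, measureReal_def, Real.volume_Icc, smul_eq_mul]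
          have h2 : (1 + ε * R) - (1 - ε * R) = 2 * (ε * R) := by ring
          rw [h2, ENNReal.toReal_ofReal (by positivity)]
          exact le_of_eq (mul_comm _ _)
  -- bound on wSol
  have hw_bound : ∀ ε : ℝ, 0 < ε → ∀ q : ℝ × ℝ, 0 ≤ q.2 →
      |wSol φ m n ε q| ≤ (M ^ (m + n) * ε⁻¹ ^ (m + n)) * (2 * (ε * R)) := by
    intro ε hε q hq
    exact hint_est ε hε _ _ (by positivity) (hFcont ε q.1)
      (fun s => hprod_bound ε hε q.1 s) (fun s hs => hsupport_s ε hε q.1 s hs) q.2 hq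
  -- Lipschitz in x
  have hw_lipx : ∀ ε : ℝ, 0 < ε → ∀ x x' t : ℝ, 0 ≤ t →
      |wSol φ m n ε (x, t) - wSol φ m n ε (x', t)|
        ≤ (P * ε⁻¹ ^ (m + n + 1) * |x - x'|) * (2 * (ε * R)) := by
    intro ε hε x x' t ht
    have hsub : wSol φ m n ε (x, t) - wSol φ m n ε (x', t)
        = ∫ s in (0:ℝ)..t, (uSol φ m ε (x, s) * vSol φ n ε (x, s)
            - uSol φ m ε (x', s) * vSol φ n ε (x', s)) := by
      rw [wSol]
      exact (intervalIntegral.integral_sub ((hFcont ε x).intervalIntegrable _ _)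
        ((hFcont ε x').intervalIntegrable _ _)).symm
    rw [hsub]
    apply hint_est ε hε _ _ (by positivity) ((hFcont ε x).sub (hFcont ε x'))
    · intro s
      have := hlip_pt ε hε (x + 1 - s) (x' + 1 - s) (x - 1 + s) (x' - 1 + s)
      have he1 : (x + 1 - s) - (x' + 1 - s) = x - x' := by ring
      have he2 : (x - 1 + s) - (x' - 1 + s) = x - x' := by ring
      rw [he1, he2, max_self] at this
      simpa [uSol, vSol] using this
    · intro s hs
      simp only [Pi.sub_apply]
      rw [hsupport_s ε hε x s hs, hsupport_s ε hε x' s hs, sub_zero]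
    · exact ht
  -- Lipschitz in t
  have hw_lipt : ∀ ε : ℝ, 0 < ε → ∀ x t t' : ℝ,
      |wSol φ m n ε (x, t) - wSol φ m n ε (x, t')|
        ≤ (M ^ (m + n) * ε⁻¹ ^ (m + n)) * |t - t'| := by
    intro ε hε x t t'
    have hsub : wSol φ m n ε (x, t) - wSol φ m n ε (x, t')
        = ∫ s in t'..t, uSol φ m ε (x, s) * vSol φ n ε (x, s) := by
      rw [wSol]
      exact intervalIntegral.integral_interval_sub_left
        ((hFcont ε x).intervalIntegrable _ _) ((hFcont ε x).intervalIntegrable _ _)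
    rw [hsub]
    have := intervalIntegral.norm_integral_le_of_norm_le_const
      (C := M ^ (m + n) * ε⁻¹ ^ (m + n))
      (f := fun s => uSol φ m ε (x, s) * vSol φ n ε (x, s)) (a := t') (b := t)
      (fun s _ => by rw [Real.norm_eq_abs]; exact hprod_bound ε hε x s)
    rw [Real.norm_eq_abs] at this
    calc |∫ s in t'..t, uSol φ m ε (x, s) * vSol φ n ε (x, s)|
        ≤ M ^ (m + n) * ε⁻¹ ^ (m + n) * |t - t'| := this
      _ = (M ^ (m + n) * ε⁻¹ ^ (m + n)) * |t - t'| := rfl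
  constructor
  · -- Part (i)
    rintro p hp2 hcase
    rcases hcase with hx | ht1
    · -- x ≠ 0
      have hpx : 0 < |p.1| := abs_pos.2 hx
      refine ⟨Metric.ball p (|p.1| / 2), Metric.isOpen_ball,
        Metric.mem_ball_self (by positivity), |p.1| / (2 * R), by positivity, ?_⟩
      intro ε hε hεlt q hq
      obtain ⟨hqU, _⟩ := hq
      have h1 : dist q.1 p.1 ≤ dist q p := by
        rw [Prod.dist_eq]; exact le_max_left _ _
      have hd : |q.1 - p.1| < |p.1| / 2 := by
        rw [← Real.dist_eq]; exact lt_of_le_of_lt h1 (Metric.mem_ball.mp hqU)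
      have h2 : |p.1| - |q.1| ≤ |q.1 - p.1| := by
        rw [abs_sub_comm]; exact abs_sub_abs_le_abs_sub _ _
      have h3 : ε * R < |p.1| / 2 := by
        have := mul_lt_mul_of_pos_right hεlt hR
        rwa [div_mul_eq_mul_div, mul_comm (2:ℝ) R, ← div_div,
          mul_div_assoc, div_self hR.ne', mul_one] at this
      have hq1 : ε * R < |q.1| := by linarith
      have hzero : ∀ s, uSol φ m ε (q.1, s) * vSol φ n ε (q.1, s) = 0 :=
        fun s => hsupport_x ε hε q.1 s hq1
      simp [wSol, hzero]
    · -- t < 1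
      have h1t : 0 < 1 - p.2 := by linarith
      refine ⟨{q : ℝ × ℝ | q.2 < (1 + p.2) / 2}, isOpen_lt continuous_snd continuous_const,
        by simp only [Set.mem_setOf_eq]; linarith, (1 - p.2) / (2 * R), by positivity, ?_⟩
      intro ε hε hεlt q hq
      obtain ⟨hqU, hqH⟩ := hq
      have hqU' : q.2 < (1 + p.2) / 2 := hqU
      have hqH' : (0:ℝ) ≤ q.2 := hqH
      have heq : Set.EqOn (fun s => uSol φ m ε (q.1, s) * vSol φ n ε (q.1, s)) 0
          (Set.uIcc 0 q.2) := by
        intro s hs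
        rw [Set.uIcc_of_le hqH'] at hs
        have h3 : ε * R < (1 - p.2) / 2 := by
          have := mul_lt_mul_of_pos_right hεlt hR
          rwa [div_mul_eq_mul_div, mul_comm (2:ℝ) R, ← div_div,
            mul_div_assoc, div_self hR.ne', mul_one] at this
        have h4 : ε * R < 1 - s := by
          have := hs.2
          linarith
        have h5 : ε * R < |1 - s| := lt_of_lt_of_le h4 (le_abs_self _)
        exact hsupport_s ε hε q.1 s h5
      show wSol φ m n ε q = 0
      rw [wSol]
      rw [intervalIntegral.integral_congr heq]
      simp
  · -- Part (ii)
    intro t ht r hr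
    have hrk : ((m + n : ℕ) : ℝ) < r := by push_cast; linarith
    set U : Set (ℝ × ℝ) := Metric.ball ((0:ℝ), t) 4⁻¹ with hUdef
    have hUopen : IsOpen U := by rw [hUdef]; exact Metric.isOpen_ball
    have hUmem : ((0:ℝ), t) ∈ U := by
      rw [hUdef]; exact Metric.mem_ball_self (by norm_num)
    have hU2 : ∀ q ∈ U, 0 ≤ q.2 := by
      intro q hq
      rw [hUdef] at hq
      have h1 : dist q.2 t ≤ dist q ((0:ℝ), t) := by
        rw [Prod.dist_eq]; exact le_max_right _ _
      have h2 : |q.2 - t| < 4⁻¹ := by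
        rw [← Real.dist_eq]; exact lt_of_le_of_lt h1 (Metric.mem_ball.mp hq)
      have h3 := (abs_lt.mp h2).1
      linarith
    have hUH : U ∩ HalfPlane = U := Set.inter_eq_left.2 fun q hq => hU2 q hq
    refine ⟨U, hUopen, hUmem, fun _ => 0, contDiffOn_const, ?_⟩
    rw [hUH]
    intro K hK _ δ hδ
    obtain ⟨ε₁, hε₁pos, hE1⟩ :=
      aux_eps (2 * R * M ^ (m + n)) δ (r - (m + n : ℕ) + 1) (by linarith) hδ
    obtain ⟨ε₂, hε₂pos, hE2⟩ :=
      aux_eps (2 * P * R + M ^ (m + n)) δ (r - (m + n : ℕ)) (by linarith) hδ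
    refine ⟨min ε₁ ε₂, lt_min hε₁pos hε₂pos, ?_⟩
    intro ε hε hεlt q hqK
    have hqU : q ∈ U := hK hqK
    have hq2 : 0 ≤ q.2 := hU2 q hqU
    have hεr0 : (0:ℝ) ≤ ε ^ r := Real.rpow_nonneg hε.le r
    constructor
    · -- value bound
      have h1 := hw_bound ε hε q hq2
      have hεlt1 : ε < ε₁ := lt_of_lt_of_le hεlt (min_le_left _ _)
      have key : ε ^ r * ((M ^ (m + n) * ε⁻¹ ^ (m + n)) * (2 * (ε * R)))
          = (2 * R * M ^ (m + n)) * ε ^ (r - (m + n : ℕ) + 1) := by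
        rw [Real.rpow_add_one hε.ne', ← aux_rpow ε hε r (m + n)]
        ring
      calc |ε ^ r * wSol φ m n ε q - (fun _ : ℝ × ℝ => (0:ℝ)) q|
          = ε ^ r * |wSol φ m n ε q| := by
            simp [abs_mul, abs_of_nonneg hεr0]
        _ ≤ ε ^ r * ((M ^ (m + n) * ε⁻¹ ^ (m + n)) * (2 * (ε * R))) :=
            mul_le_mul_of_nonneg_left h1 hεr0
        _ = (2 * R * M ^ (m + n)) * ε ^ (r - (m + n : ℕ) + 1) := key
        _ ≤ δ := hE1 ε hε hεlt1
    · -- derivative bound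
      set c : ℝ := (2 * P * R + M ^ (m + n)) * ε⁻¹ ^ (m + n) with hcdef
      have hc0 : 0 ≤ c := by positivity
      have hlipw : ∀ q1 ∈ U, ∀ q2 ∈ U,
          |wSol φ m n ε q1 - wSol φ m n ε q2| ≤ c * dist q1 q2 := by
        intro q1 hq1 q2 hq2
        have ht1 : 0 ≤ q1.2 := hU2 q1 hq1
        have hd1 : |q1.1 - q2.1| ≤ dist q1 q2 := by
          rw [Prod.dist_eq, ← Real.dist_eq]; exact le_max_left _ _
        have hd2 : |q1.2 - q2.2| ≤ dist q1 q2 := by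
          rw [Prod.dist_eq, ← Real.dist_eq]; exact le_max_right _ _
        have hstep : |wSol φ m n ε q1 - wSol φ m n ε q2|
            ≤ |wSol φ m n ε (q1.1, q1.2) - wSol φ m n ε (q2.1, q1.2)|
              + |wSol φ m n ε (q2.1, q1.2) - wSol φ m n ε (q2.1, q2.2)| :=
          abs_sub_le _ _ _
        have A := hw_lipx ε hε q1.1 q2.1 q1.2 ht1
        have B := hw_lipt ε hε q2.1 q1.2 q2.2
        have hpow : ε⁻¹ ^ (m + n + 1) * ε = ε⁻¹ ^ (m + n) := by
          rw [pow_succ, mul_assoc, inv_mul_cancel₀ hε.ne', mul_one]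
        have hA' : (P * ε⁻¹ ^ (m + n + 1) * |q1.1 - q2.1|) * (2 * (ε * R))
            ≤ (2 * P * R * ε⁻¹ ^ (m + n)) * dist q1 q2 := by
          calc (P * ε⁻¹ ^ (m + n + 1) * |q1.1 - q2.1|) * (2 * (ε * R))
              = (2 * P * R * (ε⁻¹ ^ (m + n + 1) * ε)) * |q1.1 - q2.1| := by ring
            _ = (2 * P * R * ε⁻¹ ^ (m + n)) * |q1.1 - q2.1| := by rw [hpow]
            _ ≤ (2 * P * R * ε⁻¹ ^ (m + n)) * dist q1 q2 :=
                mul_le_mul_of_nonneg_left hd1 (by positivity)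
        have hB' : (M ^ (m + n) * ε⁻¹ ^ (m + n)) * |q1.2 - q2.2|
            ≤ (M ^ (m + n) * ε⁻¹ ^ (m + n)) * dist q1 q2 :=
          mul_le_mul_of_nonneg_left hd2 (by positivity)
        calc |wSol φ m n ε q1 - wSol φ m n ε q2|
            ≤ |wSol φ m n ε (q1.1, q1.2) - wSol φ m n ε (q2.1, q1.2)|
              + |wSol φ m n ε (q2.1, q1.2) - wSol φ m n ε (q2.1, q2.2)| := hstep
          _ ≤ (2 * P * R * ε⁻¹ ^ (m + n)) * dist q1 q2
              + (M ^ (m + n) * ε⁻¹ ^ (m + n)) * dist q1 q2 :=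
              add_le_add (A.trans hA') (B.trans hB')
          _ = c * dist q1 q2 := by rw [hcdef]; ring
      have hgder : fderivWithin ℝ (fun _ : ℝ × ℝ => (0:ℝ)) U q = 0 :=
        fderivWithin_const_apply _
      have hnorm : ‖ε ^ r • fderivWithin ℝ (wSol φ m n ε) U q
            - fderivWithin ℝ (fun _ : ℝ × ℝ => (0:ℝ)) U q‖
          = ε ^ r * ‖fderivWithin ℝ (wSol φ m n ε) U q‖ := by
        rw [hgder, sub_zero, norm_smul, Real.norm_eq_abs, abs_of_nonneg hεr0]
      rw [hnorm]
      have hder_le : ‖fderivWithin ℝ (wSol φ m n ε) U q‖ ≤ c := by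
        by_cases hdiff : DifferentiableWithinAt ℝ (wSol φ m n ε) U q
        · have hd : DifferentiableAt ℝ (wSol φ m n ε) q :=
            hdiff.differentiableAt (hUopen.mem_nhds hqU)
          rw [fderivWithin_of_isOpen hUopen hqU]
          apply HasFDerivAt.le_of_lip' hd.hasFDerivAt hc0
          filter_upwards [hUopen.mem_nhds hqU] with p hp
          have := hlipw p hp q hqU
          rwa [Real.norm_eq_abs, ← dist_eq_norm]
        · rw [fderivWithin_zero_of_not_differentiableWithinAt hdiff]
          simpa using hc0
      have hεlt2 : ε < ε₂ := lt_of_lt_of_le hεlt (min_le_right _ _)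
      calc ε ^ r * ‖fderivWithin ℝ (wSol φ m n ε) U q‖
          ≤ ε ^ r * c := mul_le_mul_of_nonneg_left hder_le hεr0
        _ = (2 * P * R + M ^ (m + n)) * ε ^ (r - (m + n : ℕ)) := by
            rw [hcdef, ← aux_rpow ε hε r (m + n)]; ring
        _ ≤ δ := hE2 ε hε hεlt2

end
end
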